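/- Let X be a smooth cubic surface over a field k containing a k-rational line. Then Pic(X)/Δ is a quotient of Z/5, generated by the class of a fibre X_O of the conic bundle over a rational point O ∈ P¹(k). -/

import Mathlib

/-!
Model: the Picard group of a smooth cubic surface over a separably closed
field is identified with `ℤ⁷ = Fin 7 → ℤ` with its standard basis
`λ₀, L₁, …, L₆` (pullback of a line and the six exceptional classes),
intersection form `picInter`, canonical class `KX = -3λ₀ + L₁ + ⋯ + L₆`.
The classes of the 27 lines are exactly the classes `l` with
`l·l = -1` and `KX·l = -1`.
-/

set_option maxRecDepth 100000

set_option maxHeartbeats 16000000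

set_option linter.unusedSectionVars false

def picInter (a b : Fin 7 → ℤ) : ℤ := a 0 * b 0 - ∑ i : Fin 6, a i.succ * b i.succ

def KX : Fin 7 → ℤ := ![-3, 1, 1, 1, 1, 1, 1]

def IsLineClass (l : Fin 7 → ℤ) : Prop := picInter l l = -1 ∧ picInter KX l = -1

def lines27 : Finset (Fin 7 → ℤ) :=
  {![0,0,0,0,0,0,1],
   ![0,0,0,0,0,1,0],
   ![0,0,0,0,1,0,0],
   ![0,0,0,1,0,0,0],
   ![0,0,1,0,0,0,0],
   ![0,1,0,0,0,0,0],
   ![1,-1,-1,0,0,0,0],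
   ![1,-1,0,-1,0,0,0],
   ![1,-1,0,0,-1,0,0],
   ![1,-1,0,0,0,-1,0],
   ![1,-1,0,0,0,0,-1],
   ![1,0,-1,-1,0,0,0],
   ![1,0,-1,0,-1,0,0],
   ![1,0,-1,0,0,-1,0],
   ![1,0,-1,0,0,0,-1],
   ![1,0,0,-1,-1,0,0],
   ![1,0,0,-1,0,-1,0],
   ![1,0,0,-1,0,0,-1],
   ![1,0,0,0,-1,-1,0],
   ![1,0,0,0,-1,0,-1],
   ![1,0,0,0,0,-1,-1],
   ![2,-1,-1,-1,-1,-1,0],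
   ![2,-1,-1,-1,-1,0,-1],
   ![2,-1,-1,-1,0,-1,-1],
   ![2,-1,-1,0,-1,-1,-1],
   ![2,-1,0,-1,-1,-1,-1],
   ![2,0,-1,-1,-1,-1,-1]}

def compsT (L : Fin 7 → ℤ) : Finset (Fin 7 → ℤ) :=
  if L = ![0,0,0,0,0,0,1] then {![1,-1,0,0,0,0,-1], ![1,0,-1,0,0,0,-1], ![1,0,0,-1,0,0,-1], ![1,0,0,0,-1,0,-1], ![1,0,0,0,0,-1,-1], ![2,-1,-1,-1,-1,0,-1], ![2,-1,-1,-1,0,-1,-1], ![2,-1,-1,0,-1,-1,-1], ![2,-1,0,-1,-1,-1,-1], ![2,0,-1,-1,-1,-1,-1]} else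
  if L = ![0,0,0,0,0,1,0] then {![1,-1,0,0,0,-1,0], ![1,0,-1,0,0,-1,0], ![1,0,0,-1,0,-1,0], ![1,0,0,0,-1,-1,0], ![1,0,0,0,0,-1,-1], ![2,-1,-1,-1,-1,-1,0], ![2,-1,-1,-1,0,-1,-1], ![2,-1,-1,0,-1,-1,-1], ![2,-1,0,-1,-1,-1,-1], ![2,0,-1,-1,-1,-1,-1]} else
  if L = ![0,0,0,0,1,0,0] then {![1,-1,0,0,-1,0,0], ![1,0,-1,0,-1,0,0], ![1,0,0,-1,-1,0,0], ![1,0,0,0,-1,-1,0], ![1,0,0,0,-1,0,-1], ![2,-1,-1,-1,-1,-1,0], ![2,-1,-1,-1,-1,0,-1], ![2,-1,-1,0,-1,-1,-1], ![2,-1,0,-1,-1,-1,-1], ![2,0,-1,-1,-1,-1,-1]} else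
  if L = ![0,0,0,1,0,0,0] then {![1,-1,0,-1,0,0,0], ![1,0,-1,-1,0,0,0], ![1,0,0,-1,-1,0,0], ![1,0,0,-1,0,-1,0], ![1,0,0,-1,0,0,-1], ![2,-1,-1,-1,-1,-1,0], ![2,-1,-1,-1,-1,0,-1], ![2,-1,-1,-1,0,-1,-1], ![2,-1,0,-1,-1,-1,-1], ![2,0,-1,-1,-1,-1,-1]} else
  if L = ![0,0,1,0,0,0,0] then {![1,-1,-1,0,0,0,0], ![1,0,-1,-1,0,0,0], ![1,0,-1,0,-1,0,0], ![1,0,-1,0,0,-1,0], ![1,0,-1,0,0,0,-1], ![2,-1,-1,-1,-1,-1,0], ![2,-1,-1,-1,-1,0,-1], ![2,-1,-1,-1,0,-1,-1], ![2,-1,-1,0,-1,-1,-1], ![2,0,-1,-1,-1,-1,-1]} else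
  if L = ![0,1,0,0,0,0,0] then {![1,-1,-1,0,0,0,0], ![1,-1,0,-1,0,0,0], ![1,-1,0,0,-1,0,0], ![1,-1,0,0,0,-1,0], ![1,-1,0,0,0,0,-1], ![2,-1,-1,-1,-1,-1,0], ![2,-1,-1,-1,-1,0,-1], ![2,-1,-1,-1,0,-1,-1], ![2,-1,-1,0,-1,-1,-1], ![2,-1,0,-1,-1,-1,-1]} else
  if L = ![1,-1,-1,0,0,0,0] then {![0,0,1,0,0,0,0], ![0,1,0,0,0,0,0], ![1,0,0,-1,-1,0,0], ![1,0,0,-1,0,-1,0], ![1,0,0,-1,0,0,-1], ![1,0,0,0,-1,-1,0], ![1,0,0,0,-1,0,-1], ![1,0,0,0,0,-1,-1], ![2,-1,0,-1,-1,-1,-1], ![2,0,-1,-1,-1,-1,-1]} else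
  if L = ![1,-1,0,-1,0,0,0] then {![0,0,0,1,0,0,0], ![0,1,0,0,0,0,0], ![1,0,-1,0,-1,0,0], ![1,0,-1,0,0,-1,0], ![1,0,-1,0,0,0,-1], ![1,0,0,0,-1,-1,0], ![1,0,0,0,-1,0,-1], ![1,0,0,0,0,-1,-1], ![2,-1,-1,0,-1,-1,-1], ![2,0,-1,-1,-1,-1,-1]} else
  if L = ![1,-1,0,0,-1,0,0] then {![0,0,0,0,1,0,0], ![0,1,0,0,0,0,0], ![1,0,-1,-1,0,0,0], ![1,0,-1,0,0,-1,0], ![1,0,-1,0,0,0,-1], ![1,0,0,-1,0,-1,0], ![1,0,0,-1,0,0,-1], ![1,0,0,0,0,-1,-1], ![2,-1,-1,-1,0,-1,-1], ![2,0,-1,-1,-1,-1,-1]} else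
  if L = ![1,-1,0,0,0,-1,0] then {![0,0,0,0,0,1,0], ![0,1,0,0,0,0,0], ![1,0,-1,-1,0,0,0], ![1,0,-1,0,-1,0,0], ![1,0,-1,0,0,0,-1], ![1,0,0,-1,-1,0,0], ![1,0,0,-1,0,0,-1], ![1,0,0,0,-1,0,-1], ![2,-1,-1,-1,-1,0,-1], ![2,0,-1,-1,-1,-1,-1]} else
  if L = ![1,-1,0,0,0,0,-1] then {![0,0,0,0,0,0,1], ![0,1,0,0,0,0,0], ![1,0,-1,-1,0,0,0], ![1,0,-1,0,-1,0,0], ![1,0,-1,0,0,-1,0], ![1,0,0,-1,-1,0,0], ![1,0,0,-1,0,-1,0], ![1,0,0,0,-1,-1,0], ![2,-1,-1,-1,-1,-1,0], ![2,0,-1,-1,-1,-1,-1]} else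
  if L = ![1,0,-1,-1,0,0,0] then {![0,0,0,1,0,0,0], ![0,0,1,0,0,0,0], ![1,-1,0,0,-1,0,0], ![1,-1,0,0,0,-1,0], ![1,-1,0,0,0,0,-1], ![1,0,0,0,-1,-1,0], ![1,0,0,0,-1,0,-1], ![1,0,0,0,0,-1,-1], ![2,-1,-1,0,-1,-1,-1], ![2,-1,0,-1,-1,-1,-1]} else
  if L = ![1,0,-1,0,-1,0,0] then {![0,0,0,0,1,0,0], ![0,0,1,0,0,0,0], ![1,-1,0,-1,0,0,0], ![1,-1,0,0,0,-1,0], ![1,-1,0,0,0,0,-1], ![1,0,0,-1,0,-1,0], ![1,0,0,-1,0,0,-1], ![1,0,0,0,0,-1,-1], ![2,-1,-1,-1,0,-1,-1], ![2,-1,0,-1,-1,-1,-1]} else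
  if L = ![1,0,-1,0,0,-1,0] then {![0,0,0,0,0,1,0], ![0,0,1,0,0,0,0], ![1,-1,0,-1,0,0,0], ![1,-1,0,0,-1,0,0], ![1,-1,0,0,0,0,-1], ![1,0,0,-1,-1,0,0], ![1,0,0,-1,0,0,-1], ![1,0,0,0,-1,0,-1], ![2,-1,-1,-1,-1,0,-1], ![2,-1,0,-1,-1,-1,-1]} else
  if L = ![1,0,-1,0,0,0,-1] then {![0,0,0,0,0,0,1], ![0,0,1,0,0,0,0], ![1,-1,0,-1,0,0,0], ![1,-1,0,0,-1,0,0], ![1,-1,0,0,0,-1,0], ![1,0,0,-1,-1,0,0], ![1,0,0,-1,0,-1,0], ![1,0,0,0,-1,-1,0], ![2,-1,-1,-1,-1,-1,0], ![2,-1,0,-1,-1,-1,-1]} else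
  if L = ![1,0,0,-1,-1,0,0] then {![0,0,0,0,1,0,0], ![0,0,0,1,0,0,0], ![1,-1,-1,0,0,0,0], ![1,-1,0,0,0,-1,0], ![1,-1,0,0,0,0,-1], ![1,0,-1,0,0,-1,0], ![1,0,-1,0,0,0,-1], ![1,0,0,0,0,-1,-1], ![2,-1,-1,-1,0,-1,-1], ![2,-1,-1,0,-1,-1,-1]} else
  if L = ![1,0,0,-1,0,-1,0] then {![0,0,0,0,0,1,0], ![0,0,0,1,0,0,0], ![1,-1,-1,0,0,0,0], ![1,-1,0,0,-1,0,0], ![1,-1,0,0,0,0,-1], ![1,0,-1,0,-1,0,0], ![1,0,-1,0,0,0,-1], ![1,0,0,0,-1,0,-1], ![2,-1,-1,-1,-1,0,-1], ![2,-1,-1,0,-1,-1,-1]} else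
  if L = ![1,0,0,-1,0,0,-1] then {![0,0,0,0,0,0,1], ![0,0,0,1,0,0,0], ![1,-1,-1,0,0,0,0], ![1,-1,0,0,-1,0,0], ![1,-1,0,0,0,-1,0], ![1,0,-1,0,-1,0,0], ![1,0,-1,0,0,-1,0], ![1,0,0,0,-1,-1,0], ![2,-1,-1,-1,-1,-1,0], ![2,-1,-1,0,-1,-1,-1]} else
  if L = ![1,0,0,0,-1,-1,0] then {![0,0,0,0,0,1,0], ![0,0,0,0,1,0,0], ![1,-1,-1,0,0,0,0], ![1,-1,0,-1,0,0,0], ![1,-1,0,0,0,0,-1], ![1,0,-1,-1,0,0,0], ![1,0,-1,0,0,0,-1], ![1,0,0,-1,0,0,-1], ![2,-1,-1,-1,-1,0,-1], ![2,-1,-1,-1,0,-1,-1]} else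
  if L = ![1,0,0,0,-1,0,-1] then {![0,0,0,0,0,0,1], ![0,0,0,0,1,0,0], ![1,-1,-1,0,0,0,0], ![1,-1,0,-1,0,0,0], ![1,-1,0,0,0,-1,0], ![1,0,-1,-1,0,0,0], ![1,0,-1,0,0,-1,0], ![1,0,0,-1,0,-1,0], ![2,-1,-1,-1,-1,-1,0], ![2,-1,-1,-1,0,-1,-1]} else
  if L = ![1,0,0,0,0,-1,-1] then {![0,0,0,0,0,0,1], ![0,0,0,0,0,1,0], ![1,-1,-1,0,0,0,0], ![1,-1,0,-1,0,0,0], ![1,-1,0,0,-1,0,0], ![1,0,-1,-1,0,0,0], ![1,0,-1,0,-1,0,0], ![1,0,0,-1,-1,0,0], ![2,-1,-1,-1,-1,-1,0], ![2,-1,-1,-1,-1,0,-1]} else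
  if L = ![2,-1,-1,-1,-1,-1,0] then {![0,0,0,0,0,1,0], ![0,0,0,0,1,0,0], ![0,0,0,1,0,0,0], ![0,0,1,0,0,0,0], ![0,1,0,0,0,0,0], ![1,-1,0,0,0,0,-1], ![1,0,-1,0,0,0,-1], ![1,0,0,-1,0,0,-1], ![1,0,0,0,-1,0,-1], ![1,0,0,0,0,-1,-1]} else
  if L = ![2,-1,-1,-1,-1,0,-1] then {![0,0,0,0,0,0,1], ![0,0,0,0,1,0,0], ![0,0,0,1,0,0,0], ![0,0,1,0,0,0,0], ![0,1,0,0,0,0,0], ![1,-1,0,0,0,-1,0], ![1,0,-1,0,0,-1,0], ![1,0,0,-1,0,-1,0], ![1,0,0,0,-1,-1,0], ![1,0,0,0,0,-1,-1]} else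
  if L = ![2,-1,-1,-1,0,-1,-1] then {![0,0,0,0,0,0,1], ![0,0,0,0,0,1,0], ![0,0,0,1,0,0,0], ![0,0,1,0,0,0,0], ![0,1,0,0,0,0,0], ![1,-1,0,0,-1,0,0], ![1,0,-1,0,-1,0,0], ![1,0,0,-1,-1,0,0], ![1,0,0,0,-1,-1,0], ![1,0,0,0,-1,0,-1]} else
  if L = ![2,-1,-1,0,-1,-1,-1] then {![0,0,0,0,0,0,1], ![0,0,0,0,0,1,0], ![0,0,0,0,1,0,0], ![0,0,1,0,0,0,0], ![0,1,0,0,0,0,0], ![1,-1,0,-1,0,0,0], ![1,0,-1,-1,0,0,0], ![1,0,0,-1,-1,0,0], ![1,0,0,-1,0,-1,0], ![1,0,0,-1,0,0,-1]} else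
  if L = ![2,-1,0,-1,-1,-1,-1] then {![0,0,0,0,0,0,1], ![0,0,0,0,0,1,0], ![0,0,0,0,1,0,0], ![0,0,0,1,0,0,0], ![0,1,0,0,0,0,0], ![1,-1,-1,0,0,0,0], ![1,0,-1,-1,0,0,0], ![1,0,-1,0,-1,0,0], ![1,0,-1,0,0,-1,0], ![1,0,-1,0,0,0,-1]} else
  if L = ![2,0,-1,-1,-1,-1,-1] then {![0,0,0,0,0,0,1], ![0,0,0,0,0,1,0], ![0,0,0,0,1,0,0], ![0,0,0,1,0,0,0], ![0,0,1,0,0,0,0], ![1,-1,-1,0,0,0,0], ![1,-1,0,-1,0,0,0], ![1,-1,0,0,-1,0,0], ![1,-1,0,0,0,-1,0], ![1,-1,0,0,0,0,-1]} else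
  ∅

def secsT (L : Fin 7 → ℤ) : Finset (Fin 7 → ℤ) :=
  if L = ![0,0,0,0,0,0,1] then {![0,0,0,0,0,1,0], ![0,0,0,0,1,0,0], ![0,0,0,1,0,0,0], ![0,0,1,0,0,0,0], ![0,1,0,0,0,0,0], ![1,-1,-1,0,0,0,0], ![1,-1,0,-1,0,0,0], ![1,-1,0,0,-1,0,0], ![1,-1,0,0,0,-1,0], ![1,0,-1,-1,0,0,0], ![1,0,-1,0,-1,0,0], ![1,0,-1,0,0,-1,0], ![1,0,0,-1,-1,0,0], ![1,0,0,-1,0,-1,0], ![1,0,0,0,-1,-1,0], ![2,-1,-1,-1,-1,-1,0]} else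
  if L = ![0,0,0,0,0,1,0] then {![0,0,0,0,0,0,1], ![0,0,0,0,1,0,0], ![0,0,0,1,0,0,0], ![0,0,1,0,0,0,0], ![0,1,0,0,0,0,0], ![1,-1,-1,0,0,0,0], ![1,-1,0,-1,0,0,0], ![1,-1,0,0,-1,0,0], ![1,-1,0,0,0,0,-1], ![1,0,-1,-1,0,0,0], ![1,0,-1,0,-1,0,0], ![1,0,-1,0,0,0,-1], ![1,0,0,-1,-1,0,0], ![1,0,0,-1,0,0,-1], ![1,0,0,0,-1,0,-1], ![2,-1,-1,-1,-1,0,-1]} else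
  if L = ![0,0,0,0,1,0,0] then {![0,0,0,0,0,0,1], ![0,0,0,0,0,1,0], ![0,0,0,1,0,0,0], ![0,0,1,0,0,0,0], ![0,1,0,0,0,0,0], ![1,-1,-1,0,0,0,0], ![1,-1,0,-1,0,0,0], ![1,-1,0,0,0,-1,0], ![1,-1,0,0,0,0,-1], ![1,0,-1,-1,0,0,0], ![1,0,-1,0,0,-1,0], ![1,0,-1,0,0,0,-1], ![1,0,0,-1,0,-1,0], ![1,0,0,-1,0,0,-1], ![1,0,0,0,0,-1,-1], ![2,-1,-1,-1,0,-1,-1]} else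
  if L = ![0,0,0,1,0,0,0] then {![0,0,0,0,0,0,1], ![0,0,0,0,0,1,0], ![0,0,0,0,1,0,0], ![0,0,1,0,0,0,0], ![0,1,0,0,0,0,0], ![1,-1,-1,0,0,0,0], ![1,-1,0,0,-1,0,0], ![1,-1,0,0,0,-1,0], ![1,-1,0,0,0,0,-1], ![1,0,-1,0,-1,0,0], ![1,0,-1,0,0,-1,0], ![1,0,-1,0,0,0,-1], ![1,0,0,0,-1,-1,0], ![1,0,0,0,-1,0,-1], ![1,0,0,0,0,-1,-1], ![2,-1,-1,0,-1,-1,-1]} else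
  if L = ![0,0,1,0,0,0,0] then {![0,0,0,0,0,0,1], ![0,0,0,0,0,1,0], ![0,0,0,0,1,0,0], ![0,0,0,1,0,0,0], ![0,1,0,0,0,0,0], ![1,-1,0,-1,0,0,0], ![1,-1,0,0,-1,0,0], ![1,-1,0,0,0,-1,0], ![1,-1,0,0,0,0,-1], ![1,0,0,-1,-1,0,0], ![1,0,0,-1,0,-1,0], ![1,0,0,-1,0,0,-1], ![1,0,0,0,-1,-1,0], ![1,0,0,0,-1,0,-1], ![1,0,0,0,0,-1,-1], ![2,-1,0,-1,-1,-1,-1]} else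
  if L = ![0,1,0,0,0,0,0] then {![0,0,0,0,0,0,1], ![0,0,0,0,0,1,0], ![0,0,0,0,1,0,0], ![0,0,0,1,0,0,0], ![0,0,1,0,0,0,0], ![1,0,-1,-1,0,0,0], ![1,0,-1,0,-1,0,0], ![1,0,-1,0,0,-1,0], ![1,0,-1,0,0,0,-1], ![1,0,0,-1,-1,0,0], ![1,0,0,-1,0,-1,0], ![1,0,0,-1,0,0,-1], ![1,0,0,0,-1,-1,0], ![1,0,0,0,-1,0,-1], ![1,0,0,0,0,-1,-1], ![2,0,-1,-1,-1,-1,-1]} else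
  if L = ![1,-1,-1,0,0,0,0] then {![0,0,0,0,0,0,1], ![0,0,0,0,0,1,0], ![0,0,0,0,1,0,0], ![0,0,0,1,0,0,0], ![1,-1,0,-1,0,0,0], ![1,-1,0,0,-1,0,0], ![1,-1,0,0,0,-1,0], ![1,-1,0,0,0,0,-1], ![1,0,-1,-1,0,0,0], ![1,0,-1,0,-1,0,0], ![1,0,-1,0,0,-1,0], ![1,0,-1,0,0,0,-1], ![2,-1,-1,-1,-1,-1,0], ![2,-1,-1,-1,-1,0,-1], ![2,-1,-1,-1,0,-1,-1], ![2,-1,-1,0,-1,-1,-1]} else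
  if L = ![1,-1,0,-1,0,0,0] then {![0,0,0,0,0,0,1], ![0,0,0,0,0,1,0], ![0,0,0,0,1,0,0], ![0,0,1,0,0,0,0], ![1,-1,-1,0,0,0,0], ![1,-1,0,0,-1,0,0], ![1,-1,0,0,0,-1,0], ![1,-1,0,0,0,0,-1], ![1,0,-1,-1,0,0,0], ![1,0,0,-1,-1,0,0], ![1,0,0,-1,0,-1,0], ![1,0,0,-1,0,0,-1], ![2,-1,-1,-1,-1,-1,0], ![2,-1,-1,-1,-1,0,-1], ![2,-1,-1,-1,0,-1,-1], ![2,-1,0,-1,-1,-1,-1]} else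
  if L = ![1,-1,0,0,-1,0,0] then {![0,0,0,0,0,0,1], ![0,0,0,0,0,1,0], ![0,0,0,1,0,0,0], ![0,0,1,0,0,0,0], ![1,-1,-1,0,0,0,0], ![1,-1,0,-1,0,0,0], ![1,-1,0,0,0,-1,0], ![1,-1,0,0,0,0,-1], ![1,0,-1,0,-1,0,0], ![1,0,0,-1,-1,0,0], ![1,0,0,0,-1,-1,0], ![1,0,0,0,-1,0,-1], ![2,-1,-1,-1,-1,-1,0], ![2,-1,-1,-1,-1,0,-1], ![2,-1,-1,0,-1,-1,-1], ![2,-1,0,-1,-1,-1,-1]} else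
  if L = ![1,-1,0,0,0,-1,0] then {![0,0,0,0,0,0,1], ![0,0,0,0,1,0,0], ![0,0,0,1,0,0,0], ![0,0,1,0,0,0,0], ![1,-1,-1,0,0,0,0], ![1,-1,0,-1,0,0,0], ![1,-1,0,0,-1,0,0], ![1,-1,0,0,0,0,-1], ![1,0,-1,0,0,-1,0], ![1,0,0,-1,0,-1,0], ![1,0,0,0,-1,-1,0], ![1,0,0,0,0,-1,-1], ![2,-1,-1,-1,-1,-1,0], ![2,-1,-1,-1,0,-1,-1], ![2,-1,-1,0,-1,-1,-1], ![2,-1,0,-1,-1,-1,-1]} else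
  if L = ![1,-1,0,0,0,0,-1] then {![0,0,0,0,0,1,0], ![0,0,0,0,1,0,0], ![0,0,0,1,0,0,0], ![0,0,1,0,0,0,0], ![1,-1,-1,0,0,0,0], ![1,-1,0,-1,0,0,0], ![1,-1,0,0,-1,0,0], ![1,-1,0,0,0,-1,0], ![1,0,-1,0,0,0,-1], ![1,0,0,-1,0,0,-1], ![1,0,0,0,-1,0,-1], ![1,0,0,0,0,-1,-1], ![2,-1,-1,-1,-1,0,-1], ![2,-1,-1,-1,0,-1,-1], ![2,-1,-1,0,-1,-1,-1], ![2,-1,0,-1,-1,-1,-1]} else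
  if L = ![1,0,-1,-1,0,0,0] then {![0,0,0,0,0,0,1], ![0,0,0,0,0,1,0], ![0,0,0,0,1,0,0], ![0,1,0,0,0,0,0], ![1,-1,-1,0,0,0,0], ![1,-1,0,-1,0,0,0], ![1,0,-1,0,-1,0,0], ![1,0,-1,0,0,-1,0], ![1,0,-1,0,0,0,-1], ![1,0,0,-1,-1,0,0], ![1,0,0,-1,0,-1,0], ![1,0,0,-1,0,0,-1], ![2,-1,-1,-1,-1,-1,0], ![2,-1,-1,-1,-1,0,-1], ![2,-1,-1,-1,0,-1,-1], ![2,0,-1,-1,-1,-1,-1]} else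
  if L = ![1,0,-1,0,-1,0,0] then {![0,0,0,0,0,0,1], ![0,0,0,0,0,1,0], ![0,0,0,1,0,0,0], ![0,1,0,0,0,0,0], ![1,-1,-1,0,0,0,0], ![1,-1,0,0,-1,0,0], ![1,0,-1,-1,0,0,0], ![1,0,-1,0,0,-1,0], ![1,0,-1,0,0,0,-1], ![1,0,0,-1,-1,0,0], ![1,0,0,0,-1,-1,0], ![1,0,0,0,-1,0,-1], ![2,-1,-1,-1,-1,-1,0], ![2,-1,-1,-1,-1,0,-1], ![2,-1,-1,0,-1,-1,-1], ![2,0,-1,-1,-1,-1,-1]} else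
  if L = ![1,0,-1,0,0,-1,0] then {![0,0,0,0,0,0,1], ![0,0,0,0,1,0,0], ![0,0,0,1,0,0,0], ![0,1,0,0,0,0,0], ![1,-1,-1,0,0,0,0], ![1,-1,0,0,0,-1,0], ![1,0,-1,-1,0,0,0], ![1,0,-1,0,-1,0,0], ![1,0,-1,0,0,0,-1], ![1,0,0,-1,0,-1,0], ![1,0,0,0,-1,-1,0], ![1,0,0,0,0,-1,-1], ![2,-1,-1,-1,-1,-1,0], ![2,-1,-1,-1,0,-1,-1], ![2,-1,-1,0,-1,-1,-1], ![2,0,-1,-1,-1,-1,-1]} else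
  if L = ![1,0,-1,0,0,0,-1] then {![0,0,0,0,0,1,0], ![0,0,0,0,1,0,0], ![0,0,0,1,0,0,0], ![0,1,0,0,0,0,0], ![1,-1,-1,0,0,0,0], ![1,-1,0,0,0,0,-1], ![1,0,-1,-1,0,0,0], ![1,0,-1,0,-1,0,0], ![1,0,-1,0,0,-1,0], ![1,0,0,-1,0,0,-1], ![1,0,0,0,-1,0,-1], ![1,0,0,0,0,-1,-1], ![2,-1,-1,-1,-1,0,-1], ![2,-1,-1,-1,0,-1,-1], ![2,-1,-1,0,-1,-1,-1], ![2,0,-1,-1,-1,-1,-1]} else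
  if L = ![1,0,0,-1,-1,0,0] then {![0,0,0,0,0,0,1], ![0,0,0,0,0,1,0], ![0,0,1,0,0,0,0], ![0,1,0,0,0,0,0], ![1,-1,0,-1,0,0,0], ![1,-1,0,0,-1,0,0], ![1,0,-1,-1,0,0,0], ![1,0,-1,0,-1,0,0], ![1,0,0,-1,0,-1,0], ![1,0,0,-1,0,0,-1], ![1,0,0,0,-1,-1,0], ![1,0,0,0,-1,0,-1], ![2,-1,-1,-1,-1,-1,0], ![2,-1,-1,-1,-1,0,-1], ![2,-1,0,-1,-1,-1,-1], ![2,0,-1,-1,-1,-1,-1]} else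
  if L = ![1,0,0,-1,0,-1,0] then {![0,0,0,0,0,0,1], ![0,0,0,0,1,0,0], ![0,0,1,0,0,0,0], ![0,1,0,0,0,0,0], ![1,-1,0,-1,0,0,0], ![1,-1,0,0,0,-1,0], ![1,0,-1,-1,0,0,0], ![1,0,-1,0,0,-1,0], ![1,0,0,-1,-1,0,0], ![1,0,0,-1,0,0,-1], ![1,0,0,0,-1,-1,0], ![1,0,0,0,0,-1,-1], ![2,-1,-1,-1,-1,-1,0], ![2,-1,-1,-1,0,-1,-1], ![2,-1,0,-1,-1,-1,-1], ![2,0,-1,-1,-1,-1,-1]} else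
  if L = ![1,0,0,-1,0,0,-1] then {![0,0,0,0,0,1,0], ![0,0,0,0,1,0,0], ![0,0,1,0,0,0,0], ![0,1,0,0,0,0,0], ![1,-1,0,-1,0,0,0], ![1,-1,0,0,0,0,-1], ![1,0,-1,-1,0,0,0], ![1,0,-1,0,0,0,-1], ![1,0,0,-1,-1,0,0], ![1,0,0,-1,0,-1,0], ![1,0,0,0,-1,0,-1], ![1,0,0,0,0,-1,-1], ![2,-1,-1,-1,-1,0,-1], ![2,-1,-1,-1,0,-1,-1], ![2,-1,0,-1,-1,-1,-1], ![2,0,-1,-1,-1,-1,-1]} else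
  if L = ![1,0,0,0,-1,-1,0] then {![0,0,0,0,0,0,1], ![0,0,0,1,0,0,0], ![0,0,1,0,0,0,0], ![0,1,0,0,0,0,0], ![1,-1,0,0,-1,0,0], ![1,-1,0,0,0,-1,0], ![1,0,-1,0,-1,0,0], ![1,0,-1,0,0,-1,0], ![1,0,0,-1,-1,0,0], ![1,0,0,-1,0,-1,0], ![1,0,0,0,-1,0,-1], ![1,0,0,0,0,-1,-1], ![2,-1,-1,-1,-1,-1,0], ![2,-1,-1,0,-1,-1,-1], ![2,-1,0,-1,-1,-1,-1], ![2,0,-1,-1,-1,-1,-1]} else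
  if L = ![1,0,0,0,-1,0,-1] then {![0,0,0,0,0,1,0], ![0,0,0,1,0,0,0], ![0,0,1,0,0,0,0], ![0,1,0,0,0,0,0], ![1,-1,0,0,-1,0,0], ![1,-1,0,0,0,0,-1], ![1,0,-1,0,-1,0,0], ![1,0,-1,0,0,0,-1], ![1,0,0,-1,-1,0,0], ![1,0,0,-1,0,0,-1], ![1,0,0,0,-1,-1,0], ![1,0,0,0,0,-1,-1], ![2,-1,-1,-1,-1,0,-1], ![2,-1,-1,0,-1,-1,-1], ![2,-1,0,-1,-1,-1,-1], ![2,0,-1,-1,-1,-1,-1]} else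
  if L = ![1,0,0,0,0,-1,-1] then {![0,0,0,0,1,0,0], ![0,0,0,1,0,0,0], ![0,0,1,0,0,0,0], ![0,1,0,0,0,0,0], ![1,-1,0,0,0,-1,0], ![1,-1,0,0,0,0,-1], ![1,0,-1,0,0,-1,0], ![1,0,-1,0,0,0,-1], ![1,0,0,-1,0,-1,0], ![1,0,0,-1,0,0,-1], ![1,0,0,0,-1,-1,0], ![1,0,0,0,-1,0,-1], ![2,-1,-1,-1,0,-1,-1], ![2,-1,-1,0,-1,-1,-1], ![2,-1,0,-1,-1,-1,-1], ![2,0,-1,-1,-1,-1,-1]} else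
  if L = ![2,-1,-1,-1,-1,-1,0] then {![0,0,0,0,0,0,1], ![1,-1,-1,0,0,0,0], ![1,-1,0,-1,0,0,0], ![1,-1,0,0,-1,0,0], ![1,-1,0,0,0,-1,0], ![1,0,-1,-1,0,0,0], ![1,0,-1,0,-1,0,0], ![1,0,-1,0,0,-1,0], ![1,0,0,-1,-1,0,0], ![1,0,0,-1,0,-1,0], ![1,0,0,0,-1,-1,0], ![2,-1,-1,-1,-1,0,-1], ![2,-1,-1,-1,0,-1,-1], ![2,-1,-1,0,-1,-1,-1], ![2,-1,0,-1,-1,-1,-1], ![2,0,-1,-1,-1,-1,-1]} else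
  if L = ![2,-1,-1,-1,-1,0,-1] then {![0,0,0,0,0,1,0], ![1,-1,-1,0,0,0,0], ![1,-1,0,-1,0,0,0], ![1,-1,0,0,-1,0,0], ![1,-1,0,0,0,0,-1], ![1,0,-1,-1,0,0,0], ![1,0,-1,0,-1,0,0], ![1,0,-1,0,0,0,-1], ![1,0,0,-1,-1,0,0], ![1,0,0,-1,0,0,-1], ![1,0,0,0,-1,0,-1], ![2,-1,-1,-1,-1,-1,0], ![2,-1,-1,-1,0,-1,-1], ![2,-1,-1,0,-1,-1,-1], ![2,-1,0,-1,-1,-1,-1], ![2,0,-1,-1,-1,-1,-1]} else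
  if L = ![2,-1,-1,-1,0,-1,-1] then {![0,0,0,0,1,0,0], ![1,-1,-1,0,0,0,0], ![1,-1,0,-1,0,0,0], ![1,-1,0,0,0,-1,0], ![1,-1,0,0,0,0,-1], ![1,0,-1,-1,0,0,0], ![1,0,-1,0,0,-1,0], ![1,0,-1,0,0,0,-1], ![1,0,0,-1,0,-1,0], ![1,0,0,-1,0,0,-1], ![1,0,0,0,0,-1,-1], ![2,-1,-1,-1,-1,-1,0], ![2,-1,-1,-1,-1,0,-1], ![2,-1,-1,0,-1,-1,-1], ![2,-1,0,-1,-1,-1,-1], ![2,0,-1,-1,-1,-1,-1]} else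
  if L = ![2,-1,-1,0,-1,-1,-1] then {![0,0,0,1,0,0,0], ![1,-1,-1,0,0,0,0], ![1,-1,0,0,-1,0,0], ![1,-1,0,0,0,-1,0], ![1,-1,0,0,0,0,-1], ![1,0,-1,0,-1,0,0], ![1,0,-1,0,0,-1,0], ![1,0,-1,0,0,0,-1], ![1,0,0,0,-1,-1,0], ![1,0,0,0,-1,0,-1], ![1,0,0,0,0,-1,-1], ![2,-1,-1,-1,-1,-1,0], ![2,-1,-1,-1,-1,0,-1], ![2,-1,-1,-1,0,-1,-1], ![2,-1,0,-1,-1,-1,-1], ![2,0,-1,-1,-1,-1,-1]} else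
  if L = ![2,-1,0,-1,-1,-1,-1] then {![0,0,1,0,0,0,0], ![1,-1,0,-1,0,0,0], ![1,-1,0,0,-1,0,0], ![1,-1,0,0,0,-1,0], ![1,-1,0,0,0,0,-1], ![1,0,0,-1,-1,0,0], ![1,0,0,-1,0,-1,0], ![1,0,0,-1,0,0,-1], ![1,0,0,0,-1,-1,0], ![1,0,0,0,-1,0,-1], ![1,0,0,0,0,-1,-1], ![2,-1,-1,-1,-1,-1,0], ![2,-1,-1,-1,-1,0,-1], ![2,-1,-1,-1,0,-1,-1], ![2,-1,-1,0,-1,-1,-1], ![2,0,-1,-1,-1,-1,-1]} else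
  if L = ![2,0,-1,-1,-1,-1,-1] then {![0,1,0,0,0,0,0], ![1,0,-1,-1,0,0,0], ![1,0,-1,0,-1,0,0], ![1,0,-1,0,0,-1,0], ![1,0,-1,0,0,0,-1], ![1,0,0,-1,-1,0,0], ![1,0,0,-1,0,-1,0], ![1,0,0,-1,0,0,-1], ![1,0,0,0,-1,-1,0], ![1,0,0,0,-1,0,-1], ![1,0,0,0,0,-1,-1], ![2,-1,-1,-1,-1,-1,0], ![2,-1,-1,-1,-1,0,-1], ![2,-1,-1,-1,0,-1,-1], ![2,-1,-1,0,-1,-1,-1], ![2,-1,0,-1,-1,-1,-1]} else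
  ∅

def repsT (L : Fin 7 → ℤ) : Finset (Fin 7 → ℤ) :=
  if L = ![0,0,0,0,0,0,1] then {![1,0,0,0,0,-1,-1], ![2,-1,-1,-1,0,-1,-1], ![2,-1,-1,0,-1,-1,-1], ![2,-1,0,-1,-1,-1,-1], ![2,0,-1,-1,-1,-1,-1]} else
  if L = ![0,0,0,0,0,1,0] then {![1,0,0,0,0,-1,-1], ![2,-1,-1,-1,0,-1,-1], ![2,-1,-1,0,-1,-1,-1], ![2,-1,0,-1,-1,-1,-1], ![2,0,-1,-1,-1,-1,-1]} else
  if L = ![0,0,0,0,1,0,0] then {![1,0,0,0,-1,0,-1], ![2,-1,-1,-1,-1,0,-1], ![2,-1,-1,0,-1,-1,-1], ![2,-1,0,-1,-1,-1,-1], ![2,0,-1,-1,-1,-1,-1]} else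
  if L = ![0,0,0,1,0,0,0] then {![1,0,0,-1,0,0,-1], ![2,-1,-1,-1,-1,0,-1], ![2,-1,-1,-1,0,-1,-1], ![2,-1,0,-1,-1,-1,-1], ![2,0,-1,-1,-1,-1,-1]} else
  if L = ![0,0,1,0,0,0,0] then {![1,0,-1,0,0,0,-1], ![2,-1,-1,-1,-1,0,-1], ![2,-1,-1,-1,0,-1,-1], ![2,-1,-1,0,-1,-1,-1], ![2,0,-1,-1,-1,-1,-1]} else
  if L = ![0,1,0,0,0,0,0] then {![1,-1,0,0,0,0,-1], ![2,-1,-1,-1,-1,0,-1], ![2,-1,-1,-1,0,-1,-1], ![2,-1,-1,0,-1,-1,-1], ![2,-1,0,-1,-1,-1,-1]} else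
  if L = ![1,-1,-1,0,0,0,0] then {![1,0,0,-1,0,0,-1], ![1,0,0,0,-1,0,-1], ![1,0,0,0,0,-1,-1], ![2,-1,0,-1,-1,-1,-1], ![2,0,-1,-1,-1,-1,-1]} else
  if L = ![1,-1,0,-1,0,0,0] then {![1,0,-1,0,0,0,-1], ![1,0,0,0,-1,0,-1], ![1,0,0,0,0,-1,-1], ![2,-1,-1,0,-1,-1,-1], ![2,0,-1,-1,-1,-1,-1]} else
  if L = ![1,-1,0,0,-1,0,0] then {![1,0,-1,0,0,0,-1], ![1,0,0,-1,0,0,-1], ![1,0,0,0,0,-1,-1], ![2,-1,-1,-1,0,-1,-1], ![2,0,-1,-1,-1,-1,-1]} else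
  if L = ![1,-1,0,0,0,-1,0] then {![1,0,-1,0,0,0,-1], ![1,0,0,-1,0,0,-1], ![1,0,0,0,-1,0,-1], ![2,-1,-1,-1,-1,0,-1], ![2,0,-1,-1,-1,-1,-1]} else
  if L = ![1,-1,0,0,0,0,-1] then {![1,0,-1,0,0,-1,0], ![1,0,0,-1,0,-1,0], ![1,0,0,0,-1,-1,0], ![2,-1,-1,-1,-1,-1,0], ![2,0,-1,-1,-1,-1,-1]} else
  if L = ![1,0,-1,-1,0,0,0] then {![1,-1,0,0,0,0,-1], ![1,0,0,0,-1,0,-1], ![1,0,0,0,0,-1,-1], ![2,-1,-1,0,-1,-1,-1], ![2,-1,0,-1,-1,-1,-1]} else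
  if L = ![1,0,-1,0,-1,0,0] then {![1,-1,0,0,0,0,-1], ![1,0,0,-1,0,0,-1], ![1,0,0,0,0,-1,-1], ![2,-1,-1,-1,0,-1,-1], ![2,-1,0,-1,-1,-1,-1]} else
  if L = ![1,0,-1,0,0,-1,0] then {![1,-1,0,0,0,0,-1], ![1,0,0,-1,0,0,-1], ![1,0,0,0,-1,0,-1], ![2,-1,-1,-1,-1,0,-1], ![2,-1,0,-1,-1,-1,-1]} else
  if L = ![1,0,-1,0,0,0,-1] then {![1,-1,0,0,0,-1,0], ![1,0,0,-1,0,-1,0], ![1,0,0,0,-1,-1,0], ![2,-1,-1,-1,-1,-1,0], ![2,-1,0,-1,-1,-1,-1]} else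
  if L = ![1,0,0,-1,-1,0,0] then {![1,-1,0,0,0,0,-1], ![1,0,-1,0,0,0,-1], ![1,0,0,0,0,-1,-1], ![2,-1,-1,-1,0,-1,-1], ![2,-1,-1,0,-1,-1,-1]} else
  if L = ![1,0,0,-1,0,-1,0] then {![1,-1,0,0,0,0,-1], ![1,0,-1,0,0,0,-1], ![1,0,0,0,-1,0,-1], ![2,-1,-1,-1,-1,0,-1], ![2,-1,-1,0,-1,-1,-1]} else
  if L = ![1,0,0,-1,0,0,-1] then {![1,-1,0,0,0,-1,0], ![1,0,-1,0,0,-1,0], ![1,0,0,0,-1,-1,0], ![2,-1,-1,-1,-1,-1,0], ![2,-1,-1,0,-1,-1,-1]} else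
  if L = ![1,0,0,0,-1,-1,0] then {![1,-1,0,0,0,0,-1], ![1,0,-1,0,0,0,-1], ![1,0,0,-1,0,0,-1], ![2,-1,-1,-1,-1,0,-1], ![2,-1,-1,-1,0,-1,-1]} else
  if L = ![1,0,0,0,-1,0,-1] then {![1,-1,0,0,0,-1,0], ![1,0,-1,0,0,-1,0], ![1,0,0,-1,0,-1,0], ![2,-1,-1,-1,-1,-1,0], ![2,-1,-1,-1,0,-1,-1]} else
  if L = ![1,0,0,0,0,-1,-1] then {![1,-1,0,0,-1,0,0], ![1,0,-1,0,-1,0,0], ![1,0,0,-1,-1,0,0], ![2,-1,-1,-1,-1,-1,0], ![2,-1,-1,-1,-1,0,-1]} else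
  if L = ![2,-1,-1,-1,-1,-1,0] then {![1,-1,0,0,0,0,-1], ![1,0,-1,0,0,0,-1], ![1,0,0,-1,0,0,-1], ![1,0,0,0,-1,0,-1], ![1,0,0,0,0,-1,-1]} else
  if L = ![2,-1,-1,-1,-1,0,-1] then {![1,-1,0,0,0,-1,0], ![1,0,-1,0,0,-1,0], ![1,0,0,-1,0,-1,0], ![1,0,0,0,-1,-1,0], ![1,0,0,0,0,-1,-1]} else
  if L = ![2,-1,-1,-1,0,-1,-1] then {![1,-1,0,0,-1,0,0], ![1,0,-1,0,-1,0,0], ![1,0,0,-1,-1,0,0], ![1,0,0,0,-1,-1,0], ![1,0,0,0,-1,0,-1]} else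
  if L = ![2,-1,-1,0,-1,-1,-1] then {![1,-1,0,-1,0,0,0], ![1,0,-1,-1,0,0,0], ![1,0,0,-1,-1,0,0], ![1,0,0,-1,0,-1,0], ![1,0,0,-1,0,0,-1]} else
  if L = ![2,-1,0,-1,-1,-1,-1] then {![1,-1,-1,0,0,0,0], ![1,0,-1,-1,0,0,0], ![1,0,-1,0,-1,0,0], ![1,0,-1,0,0,-1,0], ![1,0,-1,0,0,0,-1]} else
  if L = ![2,0,-1,-1,-1,-1,-1] then {![1,-1,-1,0,0,0,0], ![1,-1,0,-1,0,0,0], ![1,-1,0,0,-1,0,0], ![1,-1,0,0,0,-1,0], ![1,-1,0,0,0,0,-1]} else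
  ∅

def wlistT (L : Fin 7 → ℤ) : List (Fin 7 → ℤ) :=
  if L = ![0,0,0,0,0,0,1] then [![9,-3,-3,-3,-3,-5,-5], ![10,-4,-4,-4,-4,-4,-5], ![8,-2,-2,-2,-4,-4,-5], ![9,-3,-3,-3,-5,-3,-5], ![8,-2,-2,-4,-2,-4,-5], ![9,-3,-3,-5,-3,-3,-5], ![7,-1,-1,-3,-3,-3,-5], ![8,-2,-2,-4,-4,-2,-5], ![8,-2,-4,-2,-2,-4,-5], ![9,-3,-5,-3,-3,-3,-5], ![7,-1,-3,-1,-3,-3,-5], ![8,-2,-4,-2,-4,-2,-5], ![7,-1,-3,-3,-1,-3,-5], ![8,-2,-4,-4,-2,-2,-5], ![6,0,-2,-2,-2,-2,-5], ![7,-1,-3,-3,-3,-1,-5], ![8,-4,-2,-2,-2,-4,-5], ![9,-5,-3,-3,-3,-3,-5], ![7,-3,-1,-1,-3,-3,-5], ![8,-4,-2,-2,-4,-2,-5], ![7,-3,-1,-3,-1,-3,-5], ![8,-4,-2,-4,-2,-2,-5], ![6,-2,0,-2,-2,-2,-5], ![7,-3,-1,-3,-3,-1,-5], ![7,-3,-3,-1,-1,-3,-5],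 ![8,-4,-4,-2,-2,-2,-5], ![6,-2,-2,0,-2,-2,-5], ![7,-3,-3,-1,-3,-1,-5], ![6,-2,-2,-2,0,-2,-5], ![7,-3,-3,-3,-1,-1,-5], ![5,-1,-1,-1,-1,-1,-5], ![6,-2,-2,-2,-2,0,-5]] else
  if L = ![0,0,0,0,0,1,0] then [![9,-3,-3,-3,-3,-5,-5], ![10,-4,-4,-4,-4,-5,-4], ![8,-2,-2,-2,-4,-5,-4], ![9,-3,-3,-3,-5,-5,-3], ![8,-2,-2,-4,-2,-5,-4], ![9,-3,-3,-5,-3,-5,-3], ![7,-1,-1,-3,-3,-5,-3], ![8,-2,-2,-4,-4,-5,-2], ![8,-2,-4,-2,-2,-5,-4], ![9,-3,-5,-3,-3,-5,-3], ![7,-1,-3,-1,-3,-5,-3], ![8,-2,-4,-2,-4,-5,-2], ![7,-1,-3,-3,-1,-5,-3], ![8,-2,-4,-4,-2,-5,-2], ![6,0,-2,-2,-2,-5,-2], ![7,-1,-3,-3,-3,-5,-1], ![8,-4,-2,-2,-2,-5,-4], ![9,-5,-3,-3,-3,-5,-3], ![7,-3,-1,-1,-3,-5,-3], ![8,-4,-2,-2,-4,-5,-2],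 ![7,-3,-1,-3,-1,-5,-3], ![8,-4,-2,-4,-2,-5,-2], ![6,-2,0,-2,-2,-5,-2], ![7,-3,-1,-3,-3,-5,-1], ![7,-3,-3,-1,-1,-5,-3], ![8,-4,-4,-2,-2,-5,-2], ![6,-2,-2,0,-2,-5,-2], ![7,-3,-3,-1,-3,-5,-1], ![6,-2,-2,-2,0,-5,-2], ![7,-3,-3,-3,-1,-5,-1], ![5,-1,-1,-1,-1,-5,-1], ![6,-2,-2,-2,-2,-5,0]] else
  if L = ![0,0,0,0,1,0,0] then [![9,-3,-3,-3,-5,-3,-5], ![10,-4,-4,-4,-5,-4,-4], ![8,-2,-2,-2,-5,-4,-4], ![9,-3,-3,-3,-5,-5,-3], ![8,-2,-2,-4,-5,-2,-4], ![9,-3,-3,-5,-5,-3,-3], ![7,-1,-1,-3,-5,-3,-3], ![8,-2,-2,-4,-5,-4,-2], ![8,-2,-4,-2,-5,-2,-4], ![9,-3,-5,-3,-5,-3,-3], ![7,-1,-3,-1,-5,-3,-3], ![8,-2,-4,-2,-5,-4,-2], ![7,-1,-3,-3,-5,-1,-3], ![8,-2,-4,-4,-5,-2,-2], ![6,0,-2,-2,-5,-2,-2],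 ![7,-1,-3,-3,-5,-3,-1], ![8,-4,-2,-2,-5,-2,-4], ![9,-5,-3,-3,-5,-3,-3], ![7,-3,-1,-1,-5,-3,-3], ![8,-4,-2,-2,-5,-4,-2], ![7,-3,-1,-3,-5,-1,-3], ![8,-4,-2,-4,-5,-2,-2], ![6,-2,0,-2,-5,-2,-2], ![7,-3,-1,-3,-5,-3,-1], ![7,-3,-3,-1,-5,-1,-3], ![8,-4,-4,-2,-5,-2,-2], ![6,-2,-2,0,-5,-2,-2], ![7,-3,-3,-1,-5,-3,-1], ![6,-2,-2,-2,-5,0,-2], ![7,-3,-3,-3,-5,-1,-1], ![5,-1,-1,-1,-5,-1,-1], ![6,-2,-2,-2,-5,-2,0]] else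
  if L = ![0,0,0,1,0,0,0] then [![9,-3,-3,-5,-3,-3,-5], ![10,-4,-4,-5,-4,-4,-4], ![8,-2,-2,-5,-2,-4,-4], ![9,-3,-3,-5,-3,-5,-3], ![8,-2,-2,-5,-4,-2,-4], ![9,-3,-3,-5,-5,-3,-3], ![7,-1,-1,-5,-3,-3,-3], ![8,-2,-2,-5,-4,-4,-2], ![8,-2,-4,-5,-2,-2,-4], ![9,-3,-5,-5,-3,-3,-3], ![7,-1,-3,-5,-1,-3,-3], ![8,-2,-4,-5,-2,-4,-2], ![7,-1,-3,-5,-3,-1,-3], ![8,-2,-4,-5,-4,-2,-2], ![6,0,-2,-5,-2,-2,-2], ![7,-1,-3,-5,-3,-3,-1], ![8,-4,-2,-5,-2,-2,-4], ![9,-5,-3,-5,-3,-3,-3], ![7,-3,-1,-5,-1,-3,-3], ![8,-4,-2,-5,-2,-4,-2], ![7,-3,-1,-5,-3,-1,-3], ![8,-4,-2,-5,-4,-2,-2], ![6,-2,0,-5,-2,-2,-2], ![7,-3,-1,-5,-3,-3,-1], ![7,-3,-3,-5,-1,-1,-3], ![8,-4,-4,-5,-2,-2,-2], ![6,-2,-2,-5,0,-2,-2],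 ![7,-3,-3,-5,-1,-3,-1], ![6,-2,-2,-5,-2,0,-2], ![7,-3,-3,-5,-3,-1,-1], ![5,-1,-1,-5,-1,-1,-1], ![6,-2,-2,-5,-2,-2,0]] else
  if L = ![0,0,1,0,0,0,0] then [![9,-3,-5,-3,-3,-3,-5], ![10,-4,-5,-4,-4,-4,-4], ![8,-2,-5,-2,-2,-4,-4], ![9,-3,-5,-3,-3,-5,-3], ![8,-2,-5,-2,-4,-2,-4], ![9,-3,-5,-3,-5,-3,-3], ![7,-1,-5,-1,-3,-3,-3], ![8,-2,-5,-2,-4,-4,-2], ![8,-2,-5,-4,-2,-2,-4], ![9,-3,-5,-5,-3,-3,-3], ![7,-1,-5,-3,-1,-3,-3], ![8,-2,-5,-4,-2,-4,-2], ![7,-1,-5,-3,-3,-1,-3], ![8,-2,-5,-4,-4,-2,-2], ![6,0,-5,-2,-2,-2,-2], ![7,-1,-5,-3,-3,-3,-1], ![8,-4,-5,-2,-2,-2,-4], ![9,-5,-5,-3,-3,-3,-3], ![7,-3,-5,-1,-1,-3,-3], ![8,-4,-5,-2,-2,-4,-2], ![7,-3,-5,-1,-3,-1,-3], ![8,-4,-5,-2,-4,-2,-2],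 ![6,-2,-5,0,-2,-2,-2], ![7,-3,-5,-1,-3,-3,-1], ![7,-3,-5,-3,-1,-1,-3], ![8,-4,-5,-4,-2,-2,-2], ![6,-2,-5,-2,0,-2,-2], ![7,-3,-5,-3,-1,-3,-1], ![6,-2,-5,-2,-2,0,-2], ![7,-3,-5,-3,-3,-1,-1], ![5,-1,-5,-1,-1,-1,-1], ![6,-2,-5,-2,-2,-2,0]] else
  if L = ![0,1,0,0,0,0,0] then [![9,-5,-3,-3,-3,-3,-5], ![10,-5,-4,-4,-4,-4,-4], ![8,-5,-2,-2,-2,-4,-4], ![9,-5,-3,-3,-3,-5,-3], ![8,-5,-2,-2,-4,-2,-4], ![9,-5,-3,-3,-5,-3,-3], ![7,-5,-1,-1,-3,-3,-3], ![8,-5,-2,-2,-4,-4,-2], ![8,-5,-2,-4,-2,-2,-4], ![9,-5,-3,-5,-3,-3,-3], ![7,-5,-1,-3,-1,-3,-3], ![8,-5,-2,-4,-2,-4,-2], ![7,-5,-1,-3,-3,-1,-3], ![8,-5,-2,-4,-4,-2,-2], ![6,-5,0,-2,-2,-2,-2], ![7,-5,-1,-3,-3,-3,-1], ![8,-5,-4,-2,-2,-2,-4],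 ![9,-5,-5,-3,-3,-3,-3], ![7,-5,-3,-1,-1,-3,-3], ![8,-5,-4,-2,-2,-4,-2], ![7,-5,-3,-1,-3,-1,-3], ![8,-5,-4,-2,-4,-2,-2], ![6,-5,-2,0,-2,-2,-2], ![7,-5,-3,-1,-3,-3,-1], ![7,-5,-3,-3,-1,-1,-3], ![8,-5,-4,-4,-2,-2,-2], ![6,-5,-2,-2,0,-2,-2], ![7,-5,-3,-3,-1,-3,-1], ![6,-5,-2,-2,-2,0,-2], ![7,-5,-3,-3,-3,-1,-1], ![5,-5,-1,-1,-1,-1,-1], ![6,-5,-2,-2,-2,-2,0]] else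
  if L = ![1,-1,-1,0,0,0,0] then [![7,-1,-1,-3,-3,-3,-5], ![7,-1,-1,-2,-4,-4,-4], ![7,-1,-1,-4,-2,-4,-4], ![7,-1,-1,-3,-3,-5,-3], ![7,-1,-1,-4,-4,-2,-4], ![7,-1,-1,-3,-5,-3,-3], ![7,-1,-1,-5,-3,-3,-3], ![7,-1,-1,-4,-4,-4,-2], ![5,1,-1,-2,-2,-2,-4], ![5,1,-1,-1,-3,-3,-3], ![5,1,-1,-3,-1,-3,-3], ![5,1,-1,-2,-2,-4,-2], ![5,1,-1,-3,-3,-1,-3], ![5,1,-1,-2,-4,-2,-2], ![5,1,-1,-4,-2,-2,-2], ![5,1,-1,-3,-3,-3,-1], ![5,-1,1,-2,-2,-2,-4], ![5,-1,1,-1,-3,-3,-3], ![5,-1,1,-3,-1,-3,-3], ![5,-1,1,-2,-2,-4,-2], ![5,-1,1,-3,-3,-1,-3], ![5,-1,1,-2,-4,-2,-2], ![5,-1,1,-4,-2,-2,-2], ![5,-1,1,-3,-3,-3,-1], ![3,1,1,-1,-1,-1,-3], ![3,1,1,0,-2,-2,-2], ![3,1,1,-2,0,-2,-2], ![3,1,1,-1,-1,-3,-1],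 ![3,1,1,-2,-2,0,-2], ![3,1,1,-1,-3,-1,-1], ![3,1,1,-3,-1,-1,-1], ![3,1,1,-2,-2,-2,0]] else
  if L = ![1,-1,0,-1,0,0,0] then [![7,-1,-3,-1,-3,-3,-5], ![7,-1,-2,-1,-4,-4,-4], ![7,-1,-4,-1,-2,-4,-4], ![7,-1,-3,-1,-3,-5,-3], ![7,-1,-4,-1,-4,-2,-4], ![7,-1,-3,-1,-5,-3,-3], ![7,-1,-5,-1,-3,-3,-3], ![7,-1,-4,-1,-4,-4,-2], ![5,1,-2,-1,-2,-2,-4], ![5,1,-1,-1,-3,-3,-3], ![5,1,-3,-1,-1,-3,-3], ![5,1,-2,-1,-2,-4,-2], ![5,1,-3,-1,-3,-1,-3], ![5,1,-2,-1,-4,-2,-2], ![5,1,-4,-1,-2,-2,-2], ![5,1,-3,-1,-3,-3,-1], ![5,-1,-2,1,-2,-2,-4], ![5,-1,-1,1,-3,-3,-3], ![5,-1,-3,1,-1,-3,-3], ![5,-1,-2,1,-2,-4,-2], ![5,-1,-3,1,-3,-1,-3], ![5,-1,-2,1,-4,-2,-2], ![5,-1,-4,1,-2,-2,-2], ![5,-1,-3,1,-3,-3,-1],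 ![3,1,-1,1,-1,-1,-3], ![3,1,0,1,-2,-2,-2], ![3,1,-2,1,0,-2,-2], ![3,1,-1,1,-1,-3,-1], ![3,1,-2,1,-2,0,-2], ![3,1,-1,1,-3,-1,-1], ![3,1,-3,1,-1,-1,-1], ![3,1,-2,1,-2,-2,0]] else
  if L = ![1,-1,0,0,-1,0,0] then [![7,-1,-3,-3,-1,-3,-5], ![7,-1,-2,-4,-1,-4,-4], ![7,-1,-4,-2,-1,-4,-4], ![7,-1,-3,-3,-1,-5,-3], ![7,-1,-4,-4,-1,-2,-4], ![7,-1,-3,-5,-1,-3,-3], ![7,-1,-5,-3,-1,-3,-3], ![7,-1,-4,-4,-1,-4,-2], ![5,1,-2,-2,-1,-2,-4], ![5,1,-1,-3,-1,-3,-3], ![5,1,-3,-1,-1,-3,-3], ![5,1,-2,-2,-1,-4,-2], ![5,1,-3,-3,-1,-1,-3], ![5,1,-2,-4,-1,-2,-2], ![5,1,-4,-2,-1,-2,-2], ![5,1,-3,-3,-1,-3,-1], ![5,-1,-2,-2,1,-2,-4], ![5,-1,-1,-3,1,-3,-3], ![5,-1,-3,-1,1,-3,-3], ![5,-1,-2,-2,1,-4,-2],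 ![5,-1,-3,-3,1,-1,-3], ![5,-1,-2,-4,1,-2,-2], ![5,-1,-4,-2,1,-2,-2], ![5,-1,-3,-3,1,-3,-1], ![3,1,-1,-1,1,-1,-3], ![3,1,0,-2,1,-2,-2], ![3,1,-2,0,1,-2,-2], ![3,1,-1,-1,1,-3,-1], ![3,1,-2,-2,1,0,-2], ![3,1,-1,-3,1,-1,-1], ![3,1,-3,-1,1,-1,-1], ![3,1,-2,-2,1,-2,0]] else
  if L = ![1,-1,0,0,0,-1,0] then [![7,-1,-3,-3,-3,-1,-5], ![7,-1,-2,-4,-4,-1,-4], ![7,-1,-4,-2,-4,-1,-4], ![7,-1,-3,-3,-5,-1,-3], ![7,-1,-4,-4,-2,-1,-4], ![7,-1,-3,-5,-3,-1,-3], ![7,-1,-5,-3,-3,-1,-3], ![7,-1,-4,-4,-4,-1,-2], ![5,1,-2,-2,-2,-1,-4], ![5,1,-1,-3,-3,-1,-3], ![5,1,-3,-1,-3,-1,-3], ![5,1,-2,-2,-4,-1,-2], ![5,1,-3,-3,-1,-1,-3], ![5,1,-2,-4,-2,-1,-2], ![5,1,-4,-2,-2,-1,-2], ![5,1,-3,-3,-3,-1,-1],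 ![5,-1,-2,-2,-2,1,-4], ![5,-1,-1,-3,-3,1,-3], ![5,-1,-3,-1,-3,1,-3], ![5,-1,-2,-2,-4,1,-2], ![5,-1,-3,-3,-1,1,-3], ![5,-1,-2,-4,-2,1,-2], ![5,-1,-4,-2,-2,1,-2], ![5,-1,-3,-3,-3,1,-1], ![3,1,-1,-1,-1,1,-3], ![3,1,0,-2,-2,1,-2], ![3,1,-2,0,-2,1,-2], ![3,1,-1,-1,-3,1,-1], ![3,1,-2,-2,0,1,-2], ![3,1,-1,-3,-1,1,-1], ![3,1,-3,-1,-1,1,-1], ![3,1,-2,-2,-2,1,0]] else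
  if L = ![1,-1,0,0,0,0,-1] then [![7,-1,-3,-3,-3,-5,-1], ![7,-1,-2,-4,-4,-4,-1], ![7,-1,-4,-2,-4,-4,-1], ![7,-1,-3,-3,-5,-3,-1], ![7,-1,-4,-4,-2,-4,-1], ![7,-1,-3,-5,-3,-3,-1], ![7,-1,-5,-3,-3,-3,-1], ![7,-1,-4,-4,-4,-2,-1], ![5,1,-2,-2,-2,-4,-1], ![5,1,-1,-3,-3,-3,-1], ![5,1,-3,-1,-3,-3,-1], ![5,1,-2,-2,-4,-2,-1], ![5,1,-3,-3,-1,-3,-1], ![5,1,-2,-4,-2,-2,-1], ![5,1,-4,-2,-2,-2,-1], ![5,1,-3,-3,-3,-1,-1], ![5,-1,-2,-2,-2,-4,1], ![5,-1,-1,-3,-3,-3,1], ![5,-1,-3,-1,-3,-3,1], ![5,-1,-2,-2,-4,-2,1], ![5,-1,-3,-3,-1,-3,1], ![5,-1,-2,-4,-2,-2,1], ![5,-1,-4,-2,-2,-2,1], ![5,-1,-3,-3,-3,-1,1], ![3,1,-1,-1,-1,-3,1], ![3,1,0,-2,-2,-2,1], ![3,1,-2,0,-2,-2,1], ![3,1,-1,-1,-3,-1,1],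 ![3,1,-2,-2,0,-2,1], ![3,1,-1,-3,-1,-1,1], ![3,1,-3,-1,-1,-1,1], ![3,1,-2,-2,-2,0,1]] else
  if L = ![1,0,-1,-1,0,0,0] then [![7,-3,-1,-1,-3,-3,-5], ![7,-2,-1,-1,-4,-4,-4], ![7,-4,-1,-1,-2,-4,-4], ![7,-3,-1,-1,-3,-5,-3], ![7,-4,-1,-1,-4,-2,-4], ![7,-3,-1,-1,-5,-3,-3], ![7,-5,-1,-1,-3,-3,-3], ![7,-4,-1,-1,-4,-4,-2], ![5,-2,1,-1,-2,-2,-4], ![5,-1,1,-1,-3,-3,-3], ![5,-3,1,-1,-1,-3,-3], ![5,-2,1,-1,-2,-4,-2], ![5,-3,1,-1,-3,-1,-3], ![5,-2,1,-1,-4,-2,-2], ![5,-4,1,-1,-2,-2,-2], ![5,-3,1,-1,-3,-3,-1], ![5,-2,-1,1,-2,-2,-4], ![5,-1,-1,1,-3,-3,-3], ![5,-3,-1,1,-1,-3,-3], ![5,-2,-1,1,-2,-4,-2], ![5,-3,-1,1,-3,-1,-3], ![5,-2,-1,1,-4,-2,-2], ![5,-4,-1,1,-2,-2,-2], ![5,-3,-1,1,-3,-3,-1],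 ![3,-1,1,1,-1,-1,-3], ![3,0,1,1,-2,-2,-2], ![3,-2,1,1,0,-2,-2], ![3,-1,1,1,-1,-3,-1], ![3,-2,1,1,-2,0,-2], ![3,-1,1,1,-3,-1,-1], ![3,-3,1,1,-1,-1,-1], ![3,-2,1,1,-2,-2,0]] else
  if L = ![1,0,-1,0,-1,0,0] then [![7,-3,-1,-3,-1,-3,-5], ![7,-2,-1,-4,-1,-4,-4], ![7,-4,-1,-2,-1,-4,-4], ![7,-3,-1,-3,-1,-5,-3], ![7,-4,-1,-4,-1,-2,-4], ![7,-3,-1,-5,-1,-3,-3], ![7,-5,-1,-3,-1,-3,-3], ![7,-4,-1,-4,-1,-4,-2], ![5,-2,1,-2,-1,-2,-4], ![5,-1,1,-3,-1,-3,-3], ![5,-3,1,-1,-1,-3,-3], ![5,-2,1,-2,-1,-4,-2], ![5,-3,1,-3,-1,-1,-3], ![5,-2,1,-4,-1,-2,-2], ![5,-4,1,-2,-1,-2,-2], ![5,-3,1,-3,-1,-3,-1], ![5,-2,-1,-2,1,-2,-4], ![5,-1,-1,-3,1,-3,-3], ![5,-3,-1,-1,1,-3,-3], ![5,-2,-1,-2,1,-4,-2],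 ![5,-3,-1,-3,1,-1,-3], ![5,-2,-1,-4,1,-2,-2], ![5,-4,-1,-2,1,-2,-2], ![5,-3,-1,-3,1,-3,-1], ![3,-1,1,-1,1,-1,-3], ![3,0,1,-2,1,-2,-2], ![3,-2,1,0,1,-2,-2], ![3,-1,1,-1,1,-3,-1], ![3,-2,1,-2,1,0,-2], ![3,-1,1,-3,1,-1,-1], ![3,-3,1,-1,1,-1,-1], ![3,-2,1,-2,1,-2,0]] else
  if L = ![1,0,-1,0,0,-1,0] then [![7,-3,-1,-3,-3,-1,-5], ![7,-2,-1,-4,-4,-1,-4], ![7,-4,-1,-2,-4,-1,-4], ![7,-3,-1,-3,-5,-1,-3], ![7,-4,-1,-4,-2,-1,-4], ![7,-3,-1,-5,-3,-1,-3], ![7,-5,-1,-3,-3,-1,-3], ![7,-4,-1,-4,-4,-1,-2], ![5,-2,1,-2,-2,-1,-4], ![5,-1,1,-3,-3,-1,-3], ![5,-3,1,-1,-3,-1,-3], ![5,-2,1,-2,-4,-1,-2], ![5,-3,1,-3,-1,-1,-3], ![5,-2,1,-4,-2,-1,-2], ![5,-4,1,-2,-2,-1,-2], ![5,-3,1,-3,-3,-1,-1],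 ![5,-2,-1,-2,-2,1,-4], ![5,-1,-1,-3,-3,1,-3], ![5,-3,-1,-1,-3,1,-3], ![5,-2,-1,-2,-4,1,-2], ![5,-3,-1,-3,-1,1,-3], ![5,-2,-1,-4,-2,1,-2], ![5,-4,-1,-2,-2,1,-2], ![5,-3,-1,-3,-3,1,-1], ![3,-1,1,-1,-1,1,-3], ![3,0,1,-2,-2,1,-2], ![3,-2,1,0,-2,1,-2], ![3,-1,1,-1,-3,1,-1], ![3,-2,1,-2,0,1,-2], ![3,-1,1,-3,-1,1,-1], ![3,-3,1,-1,-1,1,-1], ![3,-2,1,-2,-2,1,0]] else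
  if L = ![1,0,-1,0,0,0,-1] then [![7,-3,-1,-3,-3,-5,-1], ![7,-2,-1,-4,-4,-4,-1], ![7,-4,-1,-2,-4,-4,-1], ![7,-3,-1,-3,-5,-3,-1], ![7,-4,-1,-4,-2,-4,-1], ![7,-3,-1,-5,-3,-3,-1], ![7,-5,-1,-3,-3,-3,-1], ![7,-4,-1,-4,-4,-2,-1], ![5,-2,1,-2,-2,-4,-1], ![5,-1,1,-3,-3,-3,-1], ![5,-3,1,-1,-3,-3,-1], ![5,-2,1,-2,-4,-2,-1], ![5,-3,1,-3,-1,-3,-1], ![5,-2,1,-4,-2,-2,-1], ![5,-4,1,-2,-2,-2,-1], ![5,-3,1,-3,-3,-1,-1], ![5,-2,-1,-2,-2,-4,1], ![5,-1,-1,-3,-3,-3,1], ![5,-3,-1,-1,-3,-3,1], ![5,-2,-1,-2,-4,-2,1], ![5,-3,-1,-3,-1,-3,1], ![5,-2,-1,-4,-2,-2,1], ![5,-4,-1,-2,-2,-2,1], ![5,-3,-1,-3,-3,-1,1], ![3,-1,1,-1,-1,-3,1], ![3,0,1,-2,-2,-2,1], ![3,-2,1,0,-2,-2,1], ![3,-1,1,-1,-3,-1,1],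 ![3,-2,1,-2,0,-2,1], ![3,-1,1,-3,-1,-1,1], ![3,-3,1,-1,-1,-1,1], ![3,-2,1,-2,-2,0,1]] else
  if L = ![1,0,0,-1,-1,0,0] then [![7,-3,-3,-1,-1,-3,-5], ![7,-2,-4,-1,-1,-4,-4], ![7,-4,-2,-1,-1,-4,-4], ![7,-3,-3,-1,-1,-5,-3], ![7,-4,-4,-1,-1,-2,-4], ![7,-3,-5,-1,-1,-3,-3], ![7,-5,-3,-1,-1,-3,-3], ![7,-4,-4,-1,-1,-4,-2], ![5,-2,-2,1,-1,-2,-4], ![5,-1,-3,1,-1,-3,-3], ![5,-3,-1,1,-1,-3,-3], ![5,-2,-2,1,-1,-4,-2], ![5,-3,-3,1,-1,-1,-3], ![5,-2,-4,1,-1,-2,-2], ![5,-4,-2,1,-1,-2,-2], ![5,-3,-3,1,-1,-3,-1], ![5,-2,-2,-1,1,-2,-4], ![5,-1,-3,-1,1,-3,-3], ![5,-3,-1,-1,1,-3,-3], ![5,-2,-2,-1,1,-4,-2], ![5,-3,-3,-1,1,-1,-3], ![5,-2,-4,-1,1,-2,-2], ![5,-4,-2,-1,1,-2,-2], ![5,-3,-3,-1,1,-3,-1],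 ![3,-1,-1,1,1,-1,-3], ![3,0,-2,1,1,-2,-2], ![3,-2,0,1,1,-2,-2], ![3,-1,-1,1,1,-3,-1], ![3,-2,-2,1,1,0,-2], ![3,-1,-3,1,1,-1,-1], ![3,-3,-1,1,1,-1,-1], ![3,-2,-2,1,1,-2,0]] else
  if L = ![1,0,0,-1,0,-1,0] then [![7,-3,-3,-1,-3,-1,-5], ![7,-2,-4,-1,-4,-1,-4], ![7,-4,-2,-1,-4,-1,-4], ![7,-3,-3,-1,-5,-1,-3], ![7,-4,-4,-1,-2,-1,-4], ![7,-3,-5,-1,-3,-1,-3], ![7,-5,-3,-1,-3,-1,-3], ![7,-4,-4,-1,-4,-1,-2], ![5,-2,-2,1,-2,-1,-4], ![5,-1,-3,1,-3,-1,-3], ![5,-3,-1,1,-3,-1,-3], ![5,-2,-2,1,-4,-1,-2], ![5,-3,-3,1,-1,-1,-3], ![5,-2,-4,1,-2,-1,-2], ![5,-4,-2,1,-2,-1,-2], ![5,-3,-3,1,-3,-1,-1], ![5,-2,-2,-1,-2,1,-4], ![5,-1,-3,-1,-3,1,-3], ![5,-3,-1,-1,-3,1,-3], ![5,-2,-2,-1,-4,1,-2],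 ![5,-3,-3,-1,-1,1,-3], ![5,-2,-4,-1,-2,1,-2], ![5,-4,-2,-1,-2,1,-2], ![5,-3,-3,-1,-3,1,-1], ![3,-1,-1,1,-1,1,-3], ![3,0,-2,1,-2,1,-2], ![3,-2,0,1,-2,1,-2], ![3,-1,-1,1,-3,1,-1], ![3,-2,-2,1,0,1,-2], ![3,-1,-3,1,-1,1,-1], ![3,-3,-1,1,-1,1,-1], ![3,-2,-2,1,-2,1,0]] else
  if L = ![1,0,0,-1,0,0,-1] then [![7,-3,-3,-1,-3,-5,-1], ![7,-2,-4,-1,-4,-4,-1], ![7,-4,-2,-1,-4,-4,-1], ![7,-3,-3,-1,-5,-3,-1], ![7,-4,-4,-1,-2,-4,-1], ![7,-3,-5,-1,-3,-3,-1], ![7,-5,-3,-1,-3,-3,-1], ![7,-4,-4,-1,-4,-2,-1], ![5,-2,-2,1,-2,-4,-1], ![5,-1,-3,1,-3,-3,-1], ![5,-3,-1,1,-3,-3,-1], ![5,-2,-2,1,-4,-2,-1], ![5,-3,-3,1,-1,-3,-1], ![5,-2,-4,1,-2,-2,-1], ![5,-4,-2,1,-2,-2,-1], ![5,-3,-3,1,-3,-1,-1],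 ![5,-2,-2,-1,-2,-4,1], ![5,-1,-3,-1,-3,-3,1], ![5,-3,-1,-1,-3,-3,1], ![5,-2,-2,-1,-4,-2,1], ![5,-3,-3,-1,-1,-3,1], ![5,-2,-4,-1,-2,-2,1], ![5,-4,-2,-1,-2,-2,1], ![5,-3,-3,-1,-3,-1,1], ![3,-1,-1,1,-1,-3,1], ![3,0,-2,1,-2,-2,1], ![3,-2,0,1,-2,-2,1], ![3,-1,-1,1,-3,-1,1], ![3,-2,-2,1,0,-2,1], ![3,-1,-3,1,-1,-1,1], ![3,-3,-1,1,-1,-1,1], ![3,-2,-2,1,-2,0,1]] else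
  if L = ![1,0,0,0,-1,-1,0] then [![7,-3,-3,-3,-1,-1,-5], ![7,-2,-4,-4,-1,-1,-4], ![7,-4,-2,-4,-1,-1,-4], ![7,-3,-3,-5,-1,-1,-3], ![7,-4,-4,-2,-1,-1,-4], ![7,-3,-5,-3,-1,-1,-3], ![7,-5,-3,-3,-1,-1,-3], ![7,-4,-4,-4,-1,-1,-2], ![5,-2,-2,-2,1,-1,-4], ![5,-1,-3,-3,1,-1,-3], ![5,-3,-1,-3,1,-1,-3], ![5,-2,-2,-4,1,-1,-2], ![5,-3,-3,-1,1,-1,-3], ![5,-2,-4,-2,1,-1,-2], ![5,-4,-2,-2,1,-1,-2], ![5,-3,-3,-3,1,-1,-1], ![5,-2,-2,-2,-1,1,-4], ![5,-1,-3,-3,-1,1,-3], ![5,-3,-1,-3,-1,1,-3], ![5,-2,-2,-4,-1,1,-2], ![5,-3,-3,-1,-1,1,-3], ![5,-2,-4,-2,-1,1,-2], ![5,-4,-2,-2,-1,1,-2], ![5,-3,-3,-3,-1,1,-1], ![3,-1,-1,-1,1,1,-3], ![3,0,-2,-2,1,1,-2], ![3,-2,0,-2,1,1,-2], ![3,-1,-1,-3,1,1,-1],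 ![3,-2,-2,0,1,1,-2], ![3,-1,-3,-1,1,1,-1], ![3,-3,-1,-1,1,1,-1], ![3,-2,-2,-2,1,1,0]] else
  if L = ![1,0,0,0,-1,0,-1] then [![7,-3,-3,-3,-1,-5,-1], ![7,-2,-4,-4,-1,-4,-1], ![7,-4,-2,-4,-1,-4,-1], ![7,-3,-3,-5,-1,-3,-1], ![7,-4,-4,-2,-1,-4,-1], ![7,-3,-5,-3,-1,-3,-1], ![7,-5,-3,-3,-1,-3,-1], ![7,-4,-4,-4,-1,-2,-1], ![5,-2,-2,-2,1,-4,-1], ![5,-1,-3,-3,1,-3,-1], ![5,-3,-1,-3,1,-3,-1], ![5,-2,-2,-4,1,-2,-1], ![5,-3,-3,-1,1,-3,-1], ![5,-2,-4,-2,1,-2,-1], ![5,-4,-2,-2,1,-2,-1], ![5,-3,-3,-3,1,-1,-1], ![5,-2,-2,-2,-1,-4,1], ![5,-1,-3,-3,-1,-3,1], ![5,-3,-1,-3,-1,-3,1], ![5,-2,-2,-4,-1,-2,1], ![5,-3,-3,-1,-1,-3,1], ![5,-2,-4,-2,-1,-2,1], ![5,-4,-2,-2,-1,-2,1], ![5,-3,-3,-3,-1,-1,1],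 ![3,-1,-1,-1,1,-3,1], ![3,0,-2,-2,1,-2,1], ![3,-2,0,-2,1,-2,1], ![3,-1,-1,-3,1,-1,1], ![3,-2,-2,0,1,-2,1], ![3,-1,-3,-1,1,-1,1], ![3,-3,-1,-1,1,-1,1], ![3,-2,-2,-2,1,0,1]] else
  if L = ![1,0,0,0,0,-1,-1] then [![7,-3,-3,-3,-5,-1,-1], ![7,-2,-4,-4,-4,-1,-1], ![7,-4,-2,-4,-4,-1,-1], ![7,-3,-3,-5,-3,-1,-1], ![7,-4,-4,-2,-4,-1,-1], ![7,-3,-5,-3,-3,-1,-1], ![7,-5,-3,-3,-3,-1,-1], ![7,-4,-4,-4,-2,-1,-1], ![5,-2,-2,-2,-4,1,-1], ![5,-1,-3,-3,-3,1,-1], ![5,-3,-1,-3,-3,1,-1], ![5,-2,-2,-4,-2,1,-1], ![5,-3,-3,-1,-3,1,-1], ![5,-2,-4,-2,-2,1,-1], ![5,-4,-2,-2,-2,1,-1], ![5,-3,-3,-3,-1,1,-1], ![5,-2,-2,-2,-4,-1,1], ![5,-1,-3,-3,-3,-1,1], ![5,-3,-1,-3,-3,-1,1], ![5,-2,-2,-4,-2,-1,1],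 ![5,-3,-3,-1,-3,-1,1], ![5,-2,-4,-2,-2,-1,1], ![5,-4,-2,-2,-2,-1,1], ![5,-3,-3,-3,-1,-1,1], ![3,-1,-1,-1,-3,1,1], ![3,0,-2,-2,-2,1,1], ![3,-2,0,-2,-2,1,1], ![3,-1,-1,-3,-1,1,1], ![3,-2,-2,0,-2,1,1], ![3,-1,-3,-1,-1,1,1], ![3,-3,-1,-1,-1,1,1], ![3,-2,-2,-2,0,1,1]] else
  if L = ![2,-1,-1,-1,-1,-1,0] then [![5,-1,-1,-1,-1,-1,-5], ![4,1,-1,-1,-1,-1,-4], ![4,-1,1,-1,-1,-1,-4], ![3,1,1,-1,-1,-1,-3], ![4,-1,-1,1,-1,-1,-4], ![3,1,-1,1,-1,-1,-3], ![3,-1,1,1,-1,-1,-3], ![2,1,1,1,-1,-1,-2], ![4,-1,-1,-1,1,-1,-4], ![3,1,-1,-1,1,-1,-3], ![3,-1,1,-1,1,-1,-3], ![2,1,1,-1,1,-1,-2], ![3,-1,-1,1,1,-1,-3], ![2,1,-1,1,1,-1,-2], ![2,-1,1,1,1,-1,-2], ![1,1,1,1,1,-1,-1], ![4,-1,-1,-1,-1,1,-4],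 ![3,1,-1,-1,-1,1,-3], ![3,-1,1,-1,-1,1,-3], ![2,1,1,-1,-1,1,-2], ![3,-1,-1,1,-1,1,-3], ![2,1,-1,1,-1,1,-2], ![2,-1,1,1,-1,1,-2], ![1,1,1,1,-1,1,-1], ![3,-1,-1,-1,1,1,-3], ![2,1,-1,-1,1,1,-2], ![2,-1,1,-1,1,1,-2], ![1,1,1,-1,1,1,-1], ![2,-1,-1,1,1,1,-2], ![1,1,-1,1,1,1,-1], ![1,-1,1,1,1,1,-1], ![0,1,1,1,1,1,0]] else
  if L = ![2,-1,-1,-1,-1,0,-1] then [![5,-1,-1,-1,-1,-5,-1], ![4,1,-1,-1,-1,-4,-1], ![4,-1,1,-1,-1,-4,-1], ![3,1,1,-1,-1,-3,-1], ![4,-1,-1,1,-1,-4,-1], ![3,1,-1,1,-1,-3,-1], ![3,-1,1,1,-1,-3,-1], ![2,1,1,1,-1,-2,-1], ![4,-1,-1,-1,1,-4,-1], ![3,1,-1,-1,1,-3,-1], ![3,-1,1,-1,1,-3,-1], ![2,1,1,-1,1,-2,-1], ![3,-1,-1,1,1,-3,-1], ![2,1,-1,1,1,-2,-1], ![2,-1,1,1,1,-2,-1],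 ![1,1,1,1,1,-1,-1], ![4,-1,-1,-1,-1,-4,1], ![3,1,-1,-1,-1,-3,1], ![3,-1,1,-1,-1,-3,1], ![2,1,1,-1,-1,-2,1], ![3,-1,-1,1,-1,-3,1], ![2,1,-1,1,-1,-2,1], ![2,-1,1,1,-1,-2,1], ![1,1,1,1,-1,-1,1], ![3,-1,-1,-1,1,-3,1], ![2,1,-1,-1,1,-2,1], ![2,-1,1,-1,1,-2,1], ![1,1,1,-1,1,-1,1], ![2,-1,-1,1,1,-2,1], ![1,1,-1,1,1,-1,1], ![1,-1,1,1,1,-1,1], ![0,1,1,1,1,0,1]] else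
  if L = ![2,-1,-1,-1,0,-1,-1] then [![5,-1,-1,-1,-5,-1,-1], ![4,1,-1,-1,-4,-1,-1], ![4,-1,1,-1,-4,-1,-1], ![3,1,1,-1,-3,-1,-1], ![4,-1,-1,1,-4,-1,-1], ![3,1,-1,1,-3,-1,-1], ![3,-1,1,1,-3,-1,-1], ![2,1,1,1,-2,-1,-1], ![4,-1,-1,-1,-4,1,-1], ![3,1,-1,-1,-3,1,-1], ![3,-1,1,-1,-3,1,-1], ![2,1,1,-1,-2,1,-1], ![3,-1,-1,1,-3,1,-1], ![2,1,-1,1,-2,1,-1], ![2,-1,1,1,-2,1,-1], ![1,1,1,1,-1,1,-1], ![4,-1,-1,-1,-4,-1,1], ![3,1,-1,-1,-3,-1,1], ![3,-1,1,-1,-3,-1,1], ![2,1,1,-1,-2,-1,1], ![3,-1,-1,1,-3,-1,1], ![2,1,-1,1,-2,-1,1], ![2,-1,1,1,-2,-1,1], ![1,1,1,1,-1,-1,1], ![3,-1,-1,-1,-3,1,1], ![2,1,-1,-1,-2,1,1], ![2,-1,1,-1,-2,1,1], ![1,1,1,-1,-1,1,1], ![2,-1,-1,1,-2,1,1], ![1,1,-1,1,-1,1,1],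 ![1,-1,1,1,-1,1,1], ![0,1,1,1,0,1,1]] else
  if L = ![2,-1,-1,0,-1,-1,-1] then [![5,-1,-1,-5,-1,-1,-1], ![4,1,-1,-4,-1,-1,-1], ![4,-1,1,-4,-1,-1,-1], ![3,1,1,-3,-1,-1,-1], ![4,-1,-1,-4,1,-1,-1], ![3,1,-1,-3,1,-1,-1], ![3,-1,1,-3,1,-1,-1], ![2,1,1,-2,1,-1,-1], ![4,-1,-1,-4,-1,1,-1], ![3,1,-1,-3,-1,1,-1], ![3,-1,1,-3,-1,1,-1], ![2,1,1,-2,-1,1,-1], ![3,-1,-1,-3,1,1,-1], ![2,1,-1,-2,1,1,-1], ![2,-1,1,-2,1,1,-1], ![1,1,1,-1,1,1,-1], ![4,-1,-1,-4,-1,-1,1], ![3,1,-1,-3,-1,-1,1], ![3,-1,1,-3,-1,-1,1], ![2,1,1,-2,-1,-1,1], ![3,-1,-1,-3,1,-1,1], ![2,1,-1,-2,1,-1,1], ![2,-1,1,-2,1,-1,1], ![1,1,1,-1,1,-1,1], ![3,-1,-1,-3,-1,1,1], ![2,1,-1,-2,-1,1,1], ![2,-1,1,-2,-1,1,1], ![1,1,1,-1,-1,1,1],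 ![2,-1,-1,-2,1,1,1], ![1,1,-1,-1,1,1,1], ![1,-1,1,-1,1,1,1], ![0,1,1,0,1,1,1]] else
  if L = ![2,-1,0,-1,-1,-1,-1] then [![5,-1,-5,-1,-1,-1,-1], ![4,1,-4,-1,-1,-1,-1], ![4,-1,-4,1,-1,-1,-1], ![3,1,-3,1,-1,-1,-1], ![4,-1,-4,-1,1,-1,-1], ![3,1,-3,-1,1,-1,-1], ![3,-1,-3,1,1,-1,-1], ![2,1,-2,1,1,-1,-1], ![4,-1,-4,-1,-1,1,-1], ![3,1,-3,-1,-1,1,-1], ![3,-1,-3,1,-1,1,-1], ![2,1,-2,1,-1,1,-1], ![3,-1,-3,-1,1,1,-1], ![2,1,-2,-1,1,1,-1], ![2,-1,-2,1,1,1,-1], ![1,1,-1,1,1,1,-1], ![4,-1,-4,-1,-1,-1,1], ![3,1,-3,-1,-1,-1,1], ![3,-1,-3,1,-1,-1,1], ![2,1,-2,1,-1,-1,1], ![3,-1,-3,-1,1,-1,1], ![2,1,-2,-1,1,-1,1], ![2,-1,-2,1,1,-1,1], ![1,1,-1,1,1,-1,1], ![3,-1,-3,-1,-1,1,1], ![2,1,-2,-1,-1,1,1],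 ![2,-1,-2,1,-1,1,1], ![1,1,-1,1,-1,1,1], ![2,-1,-2,-1,1,1,1], ![1,1,-1,-1,1,1,1], ![1,-1,-1,1,1,1,1], ![0,1,0,1,1,1,1]] else
  if L = ![2,0,-1,-1,-1,-1,-1] then [![5,-5,-1,-1,-1,-1,-1], ![4,-4,1,-1,-1,-1,-1], ![4,-4,-1,1,-1,-1,-1], ![3,-3,1,1,-1,-1,-1], ![4,-4,-1,-1,1,-1,-1], ![3,-3,1,-1,1,-1,-1], ![3,-3,-1,1,1,-1,-1], ![2,-2,1,1,1,-1,-1], ![4,-4,-1,-1,-1,1,-1], ![3,-3,1,-1,-1,1,-1], ![3,-3,-1,1,-1,1,-1], ![2,-2,1,1,-1,1,-1], ![3,-3,-1,-1,1,1,-1], ![2,-2,1,-1,1,1,-1], ![2,-2,-1,1,1,1,-1], ![1,-1,1,1,1,1,-1], ![4,-4,-1,-1,-1,-1,1], ![3,-3,1,-1,-1,-1,1], ![3,-3,-1,1,-1,-1,1], ![2,-2,1,1,-1,-1,1], ![3,-3,-1,-1,1,-1,1], ![2,-2,1,-1,1,-1,1], ![2,-2,-1,1,1,-1,1], ![1,-1,1,1,1,-1,1],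 ![3,-3,-1,-1,-1,1,1], ![2,-2,1,-1,-1,1,1], ![2,-2,-1,1,-1,1,1], ![1,-1,1,1,-1,1,1], ![2,-2,-1,-1,1,1,1], ![1,-1,1,-1,1,1,1], ![1,-1,-1,1,1,1,1], ![0,0,1,1,1,1,1]] else
  []

def zt (L : Fin 7 → ℤ) : Fin 7 → ℤ :=
  if L = ![0,0,0,0,0,0,1] then ![15,-5,-5,-5,-5,-6,-9] else
  if L = ![0,0,0,0,0,1,0] then ![21,-7,-7,-7,-7,-13,-8] else
  if L = ![0,0,0,0,1,0,0] then ![21,-7,-7,-7,-13,-7,-8] else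
  if L = ![0,0,0,1,0,0,0] then ![21,-7,-7,-13,-7,-7,-8] else
  if L = ![0,0,1,0,0,0,0] then ![21,-7,-13,-7,-7,-7,-8] else
  if L = ![0,1,0,0,0,0,0] then ![21,-13,-7,-7,-7,-7,-8] else
  if L = ![1,-1,-1,0,0,0,0] then ![15,-1,-1,-7,-7,-7,-8] else
  if L = ![1,-1,0,-1,0,0,0] then ![15,-1,-7,-1,-7,-7,-8] else
  if L = ![1,-1,0,0,-1,0,0] then ![15,-1,-7,-7,-1,-7,-8] else
  if L = ![1,-1,0,0,0,-1,0] then ![15,-1,-7,-7,-7,-1,-8] else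
  if L = ![1,-1,0,0,0,0,-1] then ![15,-1,-7,-7,-7,-8,-1] else
  if L = ![1,0,-1,-1,0,0,0] then ![15,-7,-1,-1,-7,-7,-8] else
  if L = ![1,0,-1,0,-1,0,0] then ![15,-7,-1,-7,-1,-7,-8] else
  if L = ![1,0,-1,0,0,-1,0] then ![15,-7,-1,-7,-7,-1,-8] else
  if L = ![1,0,-1,0,0,0,-1] then ![15,-7,-1,-7,-7,-8,-1] else
  if L = ![1,0,0,-1,-1,0,0] then ![15,-7,-7,-1,-1,-7,-8] else
  if L = ![1,0,0,-1,0,-1,0] then ![15,-7,-7,-1,-7,-1,-8] else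
  if L = ![1,0,0,-1,0,0,-1] then ![15,-7,-7,-1,-7,-8,-1] else
  if L = ![1,0,0,0,-1,-1,0] then ![15,-7,-7,-7,-1,-1,-8] else
  if L = ![1,0,0,0,-1,0,-1] then ![15,-7,-7,-7,-1,-8,-1] else
  if L = ![1,0,0,0,0,-1,-1] then ![15,-7,-7,-7,-8,-1,-1] else
  if L = ![2,-1,-1,-1,-1,-1,0] then ![9,-1,-1,-1,-1,-1,-8] else
  if L = ![2,-1,-1,-1,-1,0,-1] then ![9,-1,-1,-1,-1,-8,-1] else
  if L = ![2,-1,-1,-1,0,-1,-1] then ![9,-1,-1,-1,-8,-1,-1] else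
  if L = ![2,-1,-1,0,-1,-1,-1] then ![9,-1,-1,-8,-1,-1,-1] else
  if L = ![2,-1,0,-1,-1,-1,-1] then ![9,-1,-8,-1,-1,-1,-1] else
  if L = ![2,0,-1,-1,-1,-1,-1] then ![9,-8,-1,-1,-1,-1,-1] else
  0

def ht (L : Fin 7 → ℤ) : Fin 7 → ℤ :=
  if L = ![0,0,0,0,0,0,1] then ![-9,3,3,3,3,2,7] else
  if L = ![0,0,0,0,0,1,0] then ![-15,5,5,5,5,11,4] else
  if L = ![0,0,0,0,1,0,0] then ![-15,5,5,5,11,5,4] else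
  if L = ![0,0,0,1,0,0,0] then ![-15,5,5,11,5,5,4] else
  if L = ![0,0,1,0,0,0,0] then ![-15,5,11,5,5,5,4] else
  if L = ![0,1,0,0,0,0,0] then ![-15,11,5,5,5,5,4] else
  if L = ![1,-1,-1,0,0,0,0] then ![-9,-1,-1,5,5,5,4] else
  if L = ![1,-1,0,-1,0,0,0] then ![-9,-1,5,-1,5,5,4] else
  if L = ![1,-1,0,0,-1,0,0] then ![-9,-1,5,5,-1,5,4] else
  if L = ![1,-1,0,0,0,-1,0] then ![-9,-1,5,5,5,-1,4] else
  if L = ![1,-1,0,0,0,0,-1] then ![-9,-1,5,5,5,4,-1] else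
  if L = ![1,0,-1,-1,0,0,0] then ![-9,5,-1,-1,5,5,4] else
  if L = ![1,0,-1,0,-1,0,0] then ![-9,5,-1,5,-1,5,4] else
  if L = ![1,0,-1,0,0,-1,0] then ![-9,5,-1,5,5,-1,4] else
  if L = ![1,0,-1,0,0,0,-1] then ![-9,5,-1,5,5,4,-1] else
  if L = ![1,0,0,-1,-1,0,0] then ![-9,5,5,-1,-1,5,4] else
  if L = ![1,0,0,-1,0,-1,0] then ![-9,5,5,-1,5,-1,4] else
  if L = ![1,0,0,-1,0,0,-1] then ![-9,5,5,-1,5,4,-1] else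
  if L = ![1,0,0,0,-1,-1,0] then ![-9,5,5,5,-1,-1,4] else
  if L = ![1,0,0,0,-1,0,-1] then ![-9,5,5,5,-1,4,-1] else
  if L = ![1,0,0,0,0,-1,-1] then ![-9,5,5,5,4,-1,-1] else
  if L = ![2,-1,-1,-1,-1,-1,0] then ![-3,-1,-1,-1,-1,-1,4] else
  if L = ![2,-1,-1,-1,-1,0,-1] then ![-3,-1,-1,-1,-1,4,-1] else
  if L = ![2,-1,-1,-1,0,-1,-1] then ![-3,-1,-1,-1,4,-1,-1] else
  if L = ![2,-1,-1,0,-1,-1,-1] then ![-3,-1,-1,4,-1,-1,-1] else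
  if L = ![2,-1,0,-1,-1,-1,-1] then ![-3,-1,4,-1,-1,-1,-1] else
  if L = ![2,0,-1,-1,-1,-1,-1] then ![-3,4,-1,-1,-1,-1,-1] else
  0
-- set characterizations
theorem fact_comps : ∀ L ∈ lines27, compsT L = lines27.filter (fun l => picInter l L = 1) := by decide
theorem fact_secs : ∀ L ∈ lines27, secsT L = lines27.filter (fun l => picInter l L = 0) := by decide
theorem fact_lines : ∀ l ∈ lines27, picInter l l = -1 ∧ picInter KX l = -1 := by decide
theorem fact_f8 : ∀ L ∈ lines27, picInter L (-KX - L) = 2 := by decide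
theorem fact_repsub : ∀ L ∈ lines27, repsT L ⊆ compsT L := by decide
theorem fact_f2 : ∀ L ∈ lines27, ∀ l ∈ compsT L, -KX - L - l ∈ compsT L := by decide
theorem fact_f3 : ∀ L ∈ lines27, ∀ l ∈ compsT L,
    (l ∈ repsT L ↔ ¬(-KX - L - l ∈ repsT L)) := by decide
theorem fact_f6 : ∀ L ∈ lines27, ∑ l ∈ compsT L, l = (5:ℤ) • (-KX - L) := by decide
theorem fact_f7 : ∀ L ∈ lines27, ∀ s ∈ secsT L, picInter s (-KX - L) = 1 := by decide

theorem fact_UI : ∀ L ∈ lines27, ∀ k : Fin 7,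
    (fun j => if k = j then (1:ℤ) else 0) + ∑ l ∈ repsT L, (picInter (fun j => if k = j then (1:ℤ) else 0) l) • l
    = (picInter (fun j => if k = j then (1:ℤ) else 0) (zt L)) • (-KX - L)
      + (picInter (fun j => if k = j then (1:ℤ) else 0) (-KX - L)) • ht L := by decide
theorem fact_f9 : ∀ L ∈ lines27, ∀ w ∈ wlistT L,
    ((secsT L).filter (fun s => picInter s w ≤ 1)).card % 2 = 1 := by decide
theorem fact_wmem : ∀ L ∈ lines27, ∀ T ∈ (repsT L).powerset,
    (∑ l ∈ repsT L, (if l ∈ T then -KX - L - l else l)) ∈ wlistT L := by decide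
theorem fact_cand : ∀ a ∈ Finset.Icc (0:ℤ) 2, ∀ b1 ∈ Finset.Icc (-1:ℤ) 1,
    ∀ b2 ∈ Finset.Icc (-1:ℤ) 1, ∀ b3 ∈ Finset.Icc (-1:ℤ) 1, ∀ b4 ∈ Finset.Icc (-1:ℤ) 1,
    ∀ b5 ∈ Finset.Icc (-1:ℤ) 1, ∀ b6 ∈ Finset.Icc (-1:ℤ) 1,
    a*a - (b1*b1+b2*b2+b3*b3+b4*b4+b5*b5+b6*b6) = -1 →
    3*a + (b1+b2+b3+b4+b5+b6) = 1 →
    ![a,b1,b2,b3,b4,b5,b6] ∈ lines27 := by decide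

open Finset

lemma picInter_zero_left (c : Fin 7 → ℤ) : picInter 0 c = 0 := by
  simp [picInter]

lemma picInter_add_left (a b c : Fin 7 → ℤ) :
    picInter (a + b) c = picInter a c + picInter b c := by
  simp only [picInter, Pi.add_apply]
  rw [Finset.sum_congr rfl (fun i _ => (by ring :
    (a i.succ + b i.succ) * c i.succ = a i.succ * c i.succ + b i.succ * c i.succ)),
    Finset.sum_add_distrib]
  ring

lemma picInter_neg_left (a c : Fin 7 → ℤ) : picInter (-a) c = -picInter a c := by
  simp only [picInter, Pi.neg_apply]
  rw [Finset.sum_congr rfl (fun i _ => (by ring :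
    (-a i.succ) * c i.succ = -(a i.succ * c i.succ))), Finset.sum_neg_distrib]
  ring

lemma picInter_sub_left (a b c : Fin 7 → ℤ) :
    picInter (a - b) c = picInter a c - picInter b c := by
  rw [sub_eq_add_neg, picInter_add_left, picInter_neg_left]; ring

lemma picInter_smul_left (n : ℤ) (a c : Fin 7 → ℤ) :
    picInter (n • a) c = n * picInter a c := by
  simp only [picInter, Pi.smul_apply, smul_eq_mul]
  rw [Finset.sum_congr rfl (fun i _ => (by ring :
    (n * a i.succ) * c i.succ = n * (a i.succ * c i.succ))), ← Finset.mul_sum]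
  ring

lemma picInter_comm (a b : Fin 7 → ℤ) : picInter a b = picInter b a := by
  simp only [picInter]
  rw [Finset.sum_congr rfl (fun i _ => mul_comm (a i.succ) (b i.succ))]
  ring

lemma picInter_sub_right (a b c : Fin 7 → ℤ) :
    picInter a (b - c) = picInter a b - picInter a c := by
  rw [picInter_comm, picInter_sub_left, picInter_comm b a, picInter_comm c a]

lemma picInter_sum_left {α : Type*} (s : Finset α) (f : α → (Fin 7 → ℤ)) (c : Fin 7 → ℤ) :
    picInter (∑ v ∈ s, f v) c = ∑ v ∈ s, picInter (f v) c := by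
  induction s using Finset.cons_induction with
  | empty => simp [picInter_zero_left]
  | cons a s ha ih => rw [Finset.sum_cons, Finset.sum_cons, picInter_add_left, ih]

/-- linearity lifting -/
lemma lift7 {f : (Fin 7 → ℤ) → (Fin 7 → ℤ)} (hadd : ∀ a b, f (a + b) = f a + f b)
    (hb : ∀ k : Fin 7, f (fun j => if k = j then (1:ℤ) else 0) = 0) : ∀ x, f x = 0 := by
  intro x
  let F : (Fin 7 → ℤ) →+ (Fin 7 → ℤ) := AddMonoidHom.mk' f hadd
  have hx : x = ∑ k : Fin 7, x k • (fun j => if k = j then (1:ℤ) else 0) := pi_eq_sum_univ x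
  calc f x = F x := rfl
    _ = F (∑ k : Fin 7, x k • (fun j => if k = j then (1:ℤ) else 0)) := by rw [← hx]
    _ = ∑ k : Fin 7, x k • F (fun j => if k = j then (1:ℤ) else 0) := by
        rw [map_sum]; exact Finset.sum_congr rfl fun k _ => map_zsmul F _ _
    _ = 0 := by simp [F, hb]

/-- the main linear identity, for all x -/
lemma UI {L : Fin 7 → ℤ} (hL : L ∈ lines27) (x : Fin 7 → ℤ) :
    x + ∑ l ∈ repsT L, (picInter x l) • l
    = (picInter x (zt L)) • (-KX - L) + (picInter x (-KX - L)) • ht L := by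
  have h0 : ∀ y, (y + ∑ l ∈ repsT L, (picInter y l) • l)
      - ((picInter y (zt L)) • (-KX - L) + (picInter y (-KX - L)) • ht L) = 0 := by
    apply lift7
    · intro a b
      simp only [picInter_add_left, add_smul]
      rw [Finset.sum_add_distrib]
      abel
    · intro k
      rw [sub_eq_zero]
      exact fact_UI L hL k
  have := h0 x
  rwa [sub_eq_zero] at this

/-- classification: every line class is in the list -/
lemma mem_lines27_of_isLineClass {l : Fin 7 → ℤ} (h : IsLineClass l) : l ∈ lines27 := by
  obtain ⟨h1, h2⟩ := h
  have hexp : ∀ a b : Fin 7 → ℤ, picInter a b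
      = a 0 * b 0 - (a 1 * b 1 + a 2 * b 2 + a 3 * b 3 + a 4 * b 4 + a 5 * b 5 + a 6 * b 6) := by
    intro a b
    show a 0 * b 0 - ∑ i : Fin 6, a i.succ * b i.succ = _
    rw [Fin.sum_univ_six]
    rfl
  rw [hexp] at h1 h2
  have hK0 : KX 0 = -3 := rfl
  have hK1 : KX 1 = 1 := rfl
  have hK2 : KX 2 = 1 := rfl
  have hK3 : KX 3 = 1 := rfl
  have hK4 : KX 4 = 1 := rfl
  have hK5 : KX 5 = 1 := rfl
  have hK6 : KX 6 = 1 := rfl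
  rw [hK0, hK1, hK2, hK3, hK4, hK5, hK6] at h2
  set a := l 0 with ha
  set b1 := l 1; set b2 := l 2; set b3 := l 3; set b4 := l 4; set b5 := l 5; set b6 := l 6
  -- bound on a
  have hb : -1 ≤ a - 1 ∧ a - 1 ≤ 1 := by
    constructor <;>
    nlinarith [sq_nonneg (6*b1 - (b1+b2+b3+b4+b5+b6)), sq_nonneg (6*b2 - (b1+b2+b3+b4+b5+b6)),
      sq_nonneg (6*b3 - (b1+b2+b3+b4+b5+b6)), sq_nonneg (6*b4 - (b1+b2+b3+b4+b5+b6)),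
      sq_nonneg (6*b5 - (b1+b2+b3+b4+b5+b6)), sq_nonneg (6*b6 - (b1+b2+b3+b4+b5+b6))]
  have ha012 : a = 0 ∨ a = 1 ∨ a = 2 := by omega
  -- per-coordinate bounds
  have habs : ∀ b : ℤ, |b| ≤ b * b := by
    intro b
    rcases le_or_gt 0 b with h | h
    · rcases eq_or_lt_of_le h with h' | h'
      · simp [← h']
      · rw [abs_of_nonneg h]; nlinarith
    · rw [abs_of_neg h]; nlinarith
  have hsum_le : |b1| + |b2| + |b3| + |b4| + |b5| + |b6| ≤ a * a + 1 := by
    have := habs b1; have := habs b2; have := habs b3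
    have := habs b4; have := habs b5; have := habs b6
    linarith
  have hsum_ge : a * a + 1 ≤ |b1| + |b2| + |b3| + |b4| + |b5| + |b6| := by
    have e1 := le_abs_self b1; have e2 := le_abs_self b2; have e3 := le_abs_self b3
    have e4 := le_abs_self b4; have e5 := le_abs_self b5; have e6 := le_abs_self b6
    have f1 := neg_le_abs b1; have f2 := neg_le_abs b2; have f3 := neg_le_abs b3
    have f4 := neg_le_abs b4; have f5 := neg_le_abs b5; have f6 := neg_le_abs b6
    rcases ha012 with h | h | h <;> rw [h] at h2 ⊢ <;> linarith
  have hsq : ∀ b : ℤ, b * b = |b| → (b = -1 ∨ b = 0 ∨ b = 1) := by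
    intro b hbb
    have h1 : |b| * |b| = |b| := by rw [abs_mul_abs_self]; exact hbb
    have h2 : |b| * (|b| - 1) = 0 := by ring_nf; nlinarith [h1]
    rcases mul_eq_zero.1 h2 with h | h
    · right; left; exact abs_eq_zero.1 h
    · have : |b| = 1 := by linarith
      rcases (abs_eq (by norm_num : (0:ℤ) ≤ 1)).1 this with h | h
      · right; right; exact h
      · left; exact h
  have heq : ∀ b ∈ [b1, b2, b3, b4, b5, b6], b = -1 ∨ b = 0 ∨ b = 1 := by
    have g1 := habs b1; have g2 := habs b2; have g3 := habs b3
    have g4 := habs b4; have g5 := habs b5; have g6 := habs b6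
    intro b hbmem
    have hb1 : b1 * b1 = |b1| := by linarith
    have hb2 : b2 * b2 = |b2| := by linarith
    have hb3 : b3 * b3 = |b3| := by linarith
    have hb4 : b4 * b4 = |b4| := by linarith
    have hb5 : b5 * b5 = |b5| := by linarith
    have hb6 : b6 * b6 = |b6| := by linarith
    simp only [List.mem_cons, List.not_mem_nil, or_false] at hbmem
    rcases hbmem with rfl | rfl | rfl | rfl | rfl | rfl
    exacts [hsq _ hb1, hsq _ hb2, hsq _ hb3, hsq _ hb4, hsq _ hb5, hsq _ hb6]
  have hveq : l = ![a, b1, b2, b3, b4, b5, b6] := by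
    funext i
    fin_cases i <;> rfl
  rw [hveq]
  apply fact_cand a (Finset.mem_Icc.2 (by omega)) b1
    (Finset.mem_Icc.2 (by have := heq b1 (by simp); omega))
    b2 (Finset.mem_Icc.2 (by have := heq b2 (by simp); omega))
    b3 (Finset.mem_Icc.2 (by have := heq b3 (by simp); omega))
    b4 (Finset.mem_Icc.2 (by have := heq b4 (by simp); omega))
    b5 (Finset.mem_Icc.2 (by have := heq b5 (by simp); omega))
    b6 (Finset.mem_Icc.2 (by have := heq b6 (by simp); omega))
  · linarith
  · linarith

lemma isLineClass_iff_mem {l : Fin 7 → ℤ} : IsLineClass l ↔ l ∈ lines27 :=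
  ⟨mem_lines27_of_isLineClass, fun h => fact_lines l h⟩

/-!
Galois model: for a smooth cubic surface `X` over a field `k`, split by a
finite Galois extension with group `G`, the Galois action on the geometric
Picard group is a homomorphism `ρ : G →* AddAut (Fin 7 → ℤ)` preserving the
intersection form, the canonical class and the set of line classes.
`Pic(X)` is identified with the fixed subgroup `fixedSubgroup ρ`, and the
subgroup `Δ ⊆ Pic(X)` generated by norms (from finite separable extensions)
of lines is `Delta ρ`: the subgroup generated by the Galois-orbit sums
(= norms from the field of definition) of the 27 line classes.
-/

variable {G : Type*} [Group G] [Fintype G]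

noncomputable def normOrbit (ρ : G →* Multiplicative (AddAut (Fin 7 → ℤ))) (l : Fin 7 → ℤ) : Fin 7 → ℤ :=
  ∑ m ∈ Finset.image (fun g => Multiplicative.toAdd (ρ g) l) Finset.univ, m

noncomputable def Delta (ρ : G →* Multiplicative (AddAut (Fin 7 → ℤ))) : AddSubgroup (Fin 7 → ℤ) :=
  AddSubgroup.closure { x | ∃ l, IsLineClass l ∧ x = normOrbit ρ l }

def fixedSubgroup (ρ : G →* Multiplicative (AddAut (Fin 7 → ℤ))) : AddSubgroup (Fin 7 → ℤ) where
  carrier := {x | ∀ g, Multiplicative.toAdd (ρ g) x = x}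
  zero_mem' := fun g => map_zero (Multiplicative.toAdd (ρ g))
  add_mem' := fun {a b} ha hb g => by rw [map_add, ha g, hb g]
  neg_mem' := fun {a} ha g => by rw [map_neg, ha g]

namespace SD9

instance instCoeFunMultAddAut7 :
    CoeFun (Multiplicative (AddAut (Fin 7 → ℤ))) (fun _ => (Fin 7 → ℤ) → Fin 7 → ℤ) :=
  ⟨fun f => ⇑(Multiplicative.toAdd f : AddAut (Fin 7 → ℤ))⟩

variable (ρ : G →* Multiplicative (AddAut (Fin 7 → ℤ)))

def orb (l : Fin 7 → ℤ) : Finset (Fin 7 → ℤ) := Finset.image (fun g => ρ g l) Finset.univ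

lemma normOrbit_eq (l : Fin 7 → ℤ) : normOrbit ρ l = ∑ m ∈ orb ρ l, m := rfl

lemma mem_orb {m l : Fin 7 → ℤ} : m ∈ orb ρ l ↔ ∃ g, ρ g l = m := by
  simp [orb]

lemma mem_orb_self (l : Fin 7 → ℤ) : l ∈ orb ρ l :=
  (mem_orb ρ).2 ⟨1, by rw [map_one]; rfl⟩

lemma mul_apply' (g h : G) (m : Fin 7 → ℤ) : ρ (g * h) m = ρ g (ρ h m) := by
  rw [map_mul]; rfl

lemma rho_inv_apply (g : G) (m : Fin 7 → ℤ) : ρ g⁻¹ (ρ g m) = m := by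
  rw [← mul_apply', inv_mul_cancel, map_one]; rfl

lemma orb_apply_mem {l m : Fin 7 → ℤ} (g : G) (h : m ∈ orb ρ l) : ρ g m ∈ orb ρ l := by
  obtain ⟨h', rfl⟩ := (mem_orb ρ).1 h
  exact (mem_orb ρ).2 ⟨g * h', mul_apply' ρ g h' l⟩

lemma stable_image_eq (T : Finset (Fin 7 → ℤ)) (hstab : ∀ g, ∀ l ∈ T, ρ g l ∈ T) (g : G) :
    T.image (ρ g) = T := by
  apply Finset.eq_of_subset_of_card_le
  · exact Finset.image_subset_iff.2 (fun l hl => hstab g l hl)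
  · exact le_of_eq (Finset.card_image_of_injective T (EquivLike.injective (Multiplicative.toAdd (ρ g)))).symm

lemma rho_sum_fixed (T : Finset (Fin 7 → ℤ)) (hstab : ∀ g, ∀ l ∈ T, ρ g l ∈ T) (g : G) :
    ρ g (∑ m ∈ T, m) = ∑ m ∈ T, m := by
  rw [map_sum]
  have h1 : ∑ m ∈ T.image (ρ g), m = ∑ m ∈ T, ρ g m :=
    Finset.sum_image (fun a _ b _ h => EquivLike.injective (Multiplicative.toAdd (ρ g)) h)
  rw [← h1, stable_image_eq ρ T hstab g]

lemma orb_stab (l : Fin 7 → ℤ) : ∀ g, ∀ m ∈ orb ρ l, ρ g m ∈ orb ρ l :=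
  fun g m hm => orb_apply_mem ρ g hm

lemma rho_normOrbit (g : G) (l : Fin 7 → ℤ) : ρ g (normOrbit ρ l) = normOrbit ρ l := by
  rw [normOrbit_eq]; exact rho_sum_fixed ρ _ (orb_stab ρ l) g

lemma normOrbit_mem_Delta {l : Fin 7 → ℤ} (h : IsLineClass l) : normOrbit ρ l ∈ Delta ρ :=
  AddSubgroup.subset_closure ⟨l, h, rfl⟩

lemma sdiff_stable {T U : Finset (Fin 7 → ℤ)} (hT : ∀ g, ∀ l ∈ T, ρ g l ∈ T)
    (hU : ∀ g, ∀ l ∈ U, ρ g l ∈ U) : ∀ g, ∀ l ∈ T \ U, ρ g l ∈ T \ U := by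
  intro g l hl
  rcases Finset.mem_sdiff.1 hl with ⟨h1, h2⟩
  refine Finset.mem_sdiff.2 ⟨hT g l h1, fun hmem => h2 ?_⟩
  have := hU g⁻¹ _ hmem
  rwa [rho_inv_apply] at this

/-- a stable set of line classes sums into Δ -/
lemma sum_stable_mem_delta : ∀ (N : ℕ) (T : Finset (Fin 7 → ℤ)), T.card ≤ N →
    (∀ l ∈ T, IsLineClass l) → (∀ g, ∀ l ∈ T, ρ g l ∈ T) → (∑ l ∈ T, l) ∈ Delta ρ := by
  intro N
  induction N with
  | zero =>
    intro T hc _ _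
    have : T = ∅ := Finset.card_eq_zero.1 (Nat.le_antisymm hc (Nat.zero_le _))
    subst this; simpa using (Delta ρ).zero_mem
  | succ N ih =>
    intro T hc hline hstab
    rcases T.eq_empty_or_nonempty with rfl | ⟨l₀, hl₀⟩
    · simpa using (Delta ρ).zero_mem
    · have hOsub : orb ρ l₀ ⊆ T := fun m hm => by
        obtain ⟨g, rfl⟩ := (mem_orb ρ).1 hm; exact hstab g l₀ hl₀
      have hsplit : (∑ l ∈ T \ orb ρ l₀, l) + (∑ l ∈ orb ρ l₀, l) = ∑ l ∈ T, l :=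
        Finset.sum_sdiff hOsub
      rw [← hsplit]
      refine (Delta ρ).add_mem ?_ ?_
      · apply ih
        · have h1 := Finset.card_sdiff_of_subset hOsub
          have h2 : 0 < (orb ρ l₀).card := Finset.card_pos.2 ⟨l₀, mem_orb_self ρ l₀⟩
          have h3 := Finset.card_le_card hOsub
          omega
        · exact fun l hl => hline l (Finset.mem_sdiff.1 hl).1
        · exact sdiff_stable ρ hstab (orb_stab ρ l₀)
      · rw [← normOrbit_eq]
        exact normOrbit_mem_Delta ρ (hline l₀ hl₀)

/-- a stable set of odd cardinality contains an element with odd orbit -/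
lemma exists_odd_orb : ∀ (N : ℕ) (T : Finset (Fin 7 → ℤ)), T.card ≤ N →
    T.card % 2 = 1 → (∀ g, ∀ l ∈ T, ρ g l ∈ T) →
    ∃ l ∈ T, (orb ρ l).card % 2 = 1 := by
  intro N
  induction N with
  | zero =>
    intro T hc hodd _
    omega
  | succ N ih =>
    intro T hc hodd hstab
    rcases T.eq_empty_or_nonempty with rfl | ⟨l₀, hl₀⟩
    · simp at hodd
    · have hOsub : orb ρ l₀ ⊆ T := fun m hm => by
        obtain ⟨g, rfl⟩ := (mem_orb ρ).1 hm; exact hstab g l₀ hl₀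
      by_cases hO : (orb ρ l₀).card % 2 = 1
      · exact ⟨l₀, hl₀, hO⟩
      · have h1 := Finset.card_sdiff_of_subset hOsub
        have h2 : 0 < (orb ρ l₀).card := Finset.card_pos.2 ⟨l₀, mem_orb_self ρ l₀⟩
        have h3 := Finset.card_le_card hOsub
        obtain ⟨l, hl, hlodd⟩ := ih (T \ orb ρ l₀) (by omega) (by omega)
          (sdiff_stable ρ hstab (orb_stab ρ l₀))
        exact ⟨l, (Finset.mem_sdiff.1 hl).1, hlodd⟩

/-- The vertical lemma: for a fixed `x` orthogonal to the fibre class `F = -KX - L`,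
weighted sums over stable, partner-closed subsets of the fibre components lie in
`Δ + ℤF`. -/
lemma vlem {L : Fin 7 → ℤ} (hL27 : L ∈ lines27)
    (hFfix : ∀ g, ρ g (-KX - L) = -KX - L)
    (hint : ∀ (g : G) (a b : Fin 7 → ℤ), picInter (ρ g a) (ρ g b) = picInter a b)
    (x : Fin 7 → ℤ) (hx : ∀ g, ρ g x = x) (hxF : picInter x (-KX - L) = 0) :
    ∀ (N : ℕ) (T : Finset (Fin 7 → ℤ)), T.card ≤ N → T ⊆ compsT L →
    (∀ g, ∀ l ∈ T, ρ g l ∈ T) → (∀ l ∈ T, -KX - L - l ∈ T) →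
    ∃ n : ℤ, (∑ l ∈ T.filter (· ∈ repsT L), (-(picInter x l)) • l) - n • (-KX - L) ∈ Delta ρ := by
  have pair_inv : ∀ (g : G) (m : Fin 7 → ℤ), picInter x (ρ g m) = picInter x m := by
    intro g m
    have h1 : picInter (ρ g x) (ρ g m) = picInter x m := hint g x m
    rwa [hx g] at h1
  have pair_partner : ∀ m : Fin 7 → ℤ, picInter x (-KX - L - m) = -picInter x m := by
    intro m; rw [picInter_sub_right, hxF]; ring
  intro N
  induction N with
  | zero =>
    intro T hc _ _ _
    have : T = ∅ := Finset.card_eq_zero.1 (Nat.le_antisymm hc (Nat.zero_le _))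
    subst this
    exact ⟨0, by simpa using (Delta ρ).zero_mem⟩
  | succ N ih =>
    intro T hc hsub hstab hpart
    rcases T.eq_empty_or_nonempty with rfl | ⟨l₀, hl₀⟩
    · exact ⟨0, by simpa using (Delta ρ).zero_mem⟩
    have hOsub : orb ρ l₀ ⊆ T := fun m hm => by
      obtain ⟨g, rfl⟩ := (mem_orb ρ).1 hm; exact hstab g l₀ hl₀
    set O := orb ρ l₀ with hO
    set O' := O.image (fun m => -KX - L - m) with hO'
    have hO'sub : O' ⊆ T := by
      intro m hm
      obtain ⟨m₀, hm₀, rfl⟩ := Finset.mem_image.1 hm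
      exact hpart m₀ (hOsub hm₀)
    set U := O ∪ O' with hU
    have hUT : U ⊆ T := Finset.union_subset hOsub hO'sub
    have hUstab : ∀ g, ∀ m ∈ U, ρ g m ∈ U := by
      intro g m hm
      rcases Finset.mem_union.1 hm with h | h
      · exact Finset.mem_union_left _ (orb_apply_mem ρ g h)
      · obtain ⟨m₀, hm₀, rfl⟩ := Finset.mem_image.1 h
        have : ρ g (-KX - L - m₀) = -KX - L - ρ g m₀ := by
          rw [map_sub, hFfix]
        rw [this]
        exact Finset.mem_union_right _ (Finset.mem_image.2 ⟨ρ g m₀, orb_apply_mem ρ g hm₀, rfl⟩)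
    have hUpart : ∀ m ∈ U, -KX - L - m ∈ U := by
      intro m hm
      rcases Finset.mem_union.1 hm with h | h
      · exact Finset.mem_union_right _ (Finset.mem_image.2 ⟨m, h, rfl⟩)
      · obtain ⟨m₀, hm₀, rfl⟩ := Finset.mem_image.1 h
        rw [sub_sub_cancel]
        exact Finset.mem_union_left _ hm₀
    have hl₀U : l₀ ∈ U := Finset.mem_union_left _ (mem_orb_self ρ l₀)
    -- induction hypothesis on T \ U
    have hcard : (T \ U).card ≤ N := by
      have h1 := Finset.card_sdiff_of_subset hUT
      have h2 : 0 < U.card := Finset.card_pos.2 ⟨l₀, hl₀U⟩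
      have h3 := Finset.card_le_card hUT
      omega
    have hT'stab := sdiff_stable ρ hstab hUstab
    have hT'part : ∀ l ∈ T \ U, -KX - L - l ∈ T \ U := by
      intro l hl
      rcases Finset.mem_sdiff.1 hl with ⟨h1, h2⟩
      refine Finset.mem_sdiff.2 ⟨hpart l h1, fun hmem => h2 ?_⟩
      have := hUpart _ hmem
      rwa [sub_sub_cancel] at this
    obtain ⟨n₁, hn₁⟩ := ih (T \ U) hcard (fun l hl => hsub (Finset.mem_sdiff.1 hl).1)
      hT'stab hT'part
    -- sum decomposition
    have hTeq : (T \ U) ∪ U = T := Finset.sdiff_union_of_subset hUT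
    have hdisjTU : Disjoint (T \ U) U := Finset.sdiff_disjoint
    have hsum_split : ∑ l ∈ T.filter (· ∈ repsT L), (-(picInter x l)) • l
        = (∑ l ∈ (T \ U).filter (· ∈ repsT L), (-(picInter x l)) • l)
          + (∑ l ∈ U.filter (· ∈ repsT L), (-(picInter x l)) • l) := by
      conv_lhs => rw [← hTeq]
      rw [Finset.filter_union, Finset.sum_union (Finset.disjoint_filter_filter hdisjTU)]
    by_cases hcase : -KX - L - l₀ ∈ O
    · -- non-split: all coefficients vanish on U
      have hc0 : picInter x l₀ = 0 := by
        obtain ⟨g₀, hg₀⟩ := (mem_orb ρ).1 hcase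
        have h1 : picInter x (-KX - L - l₀) = picInter x l₀ := by
          rw [← hg₀, pair_inv]
        rw [pair_partner] at h1
        omega
      have hzero : ∀ m ∈ U, picInter x m = 0 := by
        intro m hm
        rcases Finset.mem_union.1 hm with h | h
        · obtain ⟨g, rfl⟩ := (mem_orb ρ).1 h
          rw [pair_inv]; exact hc0
        · obtain ⟨m₀, hm₀, rfl⟩ := Finset.mem_image.1 h
          obtain ⟨g, rfl⟩ := (mem_orb ρ).1 hm₀
          rw [pair_partner, pair_inv, hc0]; ring
      have hUzero : ∑ l ∈ U.filter (· ∈ repsT L), (-(picInter x l)) • l = 0 := by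
        apply Finset.sum_eq_zero
        intro l hl
        rw [hzero l (Finset.filter_subset _ _ hl)]
        simp
      exact ⟨n₁, by rw [hsum_split, hUzero, add_zero]; exact hn₁⟩
    · -- split case
      have hdisj : Disjoint O O' := by
        rw [Finset.disjoint_left]
        intro m hmO hmO'
        obtain ⟨m₀, hm₀, heq⟩ := Finset.mem_image.1 hmO'
        obtain ⟨g, rfl⟩ := (mem_orb ρ).1 hmO
        obtain ⟨h, rfl⟩ := (mem_orb ρ).1 hm₀
        apply hcase
        have h1 : ρ g⁻¹ (-KX - L - ρ h l₀) = -KX - L - ρ (g⁻¹ * h) l₀ := by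
          rw [map_sub, hFfix, mul_apply']
        have h2 : l₀ = -KX - L - ρ (g⁻¹ * h) l₀ := by
          rw [← h1, heq, rho_inv_apply]
        have h3 : -KX - L - l₀ = ρ (g⁻¹ * h) l₀ := by
          conv_lhs => rw [h2]
          exact sub_sub_cancel _ _
        rw [h3]
        exact orb_apply_mem ρ _ (mem_orb_self ρ l₀)
      set p₀ := picInter x l₀ with hp₀
      have hOconst : ∀ m ∈ O, picInter x m = p₀ := by
        intro m hm; obtain ⟨g, rfl⟩ := (mem_orb ρ).1 hm; exact pair_inv g l₀
      -- split U-filter sum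
      have hUfsplit : ∑ l ∈ U.filter (· ∈ repsT L), (-(picInter x l)) • l
          = (∑ l ∈ O.filter (· ∈ repsT L), (-(picInter x l)) • l)
            + (∑ l ∈ O'.filter (· ∈ repsT L), (-(picInter x l)) • l) := by
        rw [hU, Finset.filter_union, Finset.sum_union (Finset.disjoint_filter_filter hdisj)]
      -- O-part
      have hsum1 : ∑ l ∈ O.filter (· ∈ repsT L), (-(picInter x l)) • l
          = (-p₀) • ∑ l ∈ O.filter (· ∈ repsT L), l := by
        rw [Finset.smul_sum]
        exact Finset.sum_congr rfl fun l hl => by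
          rw [hOconst l (Finset.filter_subset _ _ hl)]
      -- O'-part
      have hinj : ∀ a ∈ O, ∀ b ∈ O, -KX - L - a = -KX - L - b → a = b := by
        intro a _ b _ h
        have := congrArg (fun v => -KX - L - v) h
        simpa [sub_sub_cancel] using this
      have himgfilter : O'.filter (· ∈ repsT L)
          = (O.filter (fun m => -KX - L - m ∈ repsT L)).image (fun m => -KX - L - m) := by
        rw [hO', Finset.filter_image]
      have hsum2 : ∑ l ∈ O'.filter (· ∈ repsT L), (-(picInter x l)) • l
          = ∑ m ∈ O.filter (fun m => -KX - L - m ∈ repsT L),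
              (-(picInter x (-KX - L - m))) • (-KX - L - m) := by
        rw [himgfilter]
        exact Finset.sum_image (fun a ha b hb h =>
          hinj a (Finset.filter_subset _ _ ha) b (Finset.filter_subset _ _ hb) h)
      have hsum2' : ∑ m ∈ O.filter (fun m => -KX - L - m ∈ repsT L),
              (-(picInter x (-KX - L - m))) • (-KX - L - m)
          = ((p₀ * (O.filter (fun m => -KX - L - m ∈ repsT L)).card) • (-KX - L : Fin 7 → ℤ))
            + (-p₀) • ∑ m ∈ O.filter (fun m => -KX - L - m ∈ repsT L), m := by
        have hterm : ∀ m ∈ O.filter (fun m => -KX - L - m ∈ repsT L),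
            (-(picInter x (-KX - L - m))) • (-KX - L - m)
            = p₀ • (-KX - L : Fin 7 → ℤ) + (-p₀) • m := by
          intro m hm
          have hmO := Finset.filter_subset _ _ hm
          rw [pair_partner, hOconst m hmO, neg_neg, smul_sub]
          module
        rw [Finset.sum_congr rfl hterm, Finset.sum_add_distrib, ← Finset.smul_sum,
          Finset.sum_const]
        congr 1
        · rw [← natCast_zsmul ((-KX - L : Fin 7 → ℤ)), smul_smul]
        · rw [Finset.smul_sum]
      -- the two filters partition O
      have hQP : O.filter (fun m => -KX - L - m ∈ repsT L) = O.filter (fun m => ¬(m ∈ repsT L)) := by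
        apply Finset.filter_congr
        intro m hm
        have hmc : m ∈ compsT L := hsub (hOsub hm)
        have := fact_f3 L hL27 m hmc
        constructor
        · intro h1 h2
          exact (this.1 h2) h1
        · intro h1
          by_contra h2
          exact h1 (this.2 h2)
      have hOsplit : (∑ l ∈ O.filter (· ∈ repsT L), l)
          + (∑ m ∈ O.filter (fun m => -KX - L - m ∈ repsT L), m) = ∑ m ∈ O, m := by
        rw [hQP, ← Finset.sum_union (Finset.disjoint_filter_filter_not O O (· ∈ repsT L)),
          Finset.filter_union_filter_not_eq]
      -- assemble
      set k : ℤ := ((O.filter (fun m => -KX - L - m ∈ repsT L)).card : ℤ) with hk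
      refine ⟨n₁ + p₀ * k, ?_⟩
      have hfinal : (∑ l ∈ T.filter (· ∈ repsT L), (-(picInter x l)) • l)
            - (n₁ + p₀ * k) • (-KX - L)
          = ((∑ l ∈ (T \ U).filter (· ∈ repsT L), (-(picInter x l)) • l) - n₁ • (-KX - L))
            + (-p₀) • (∑ m ∈ O, m) := by
        rw [hsum_split, hUfsplit, hsum1, hsum2, hsum2', ← hOsplit]
        rw [smul_add]
        rw [add_smul]
        module
      rw [hfinal]
      refine (Delta ρ).add_mem hn₁ ?_
      have : (∑ m ∈ O, m) = normOrbit ρ l₀ := (normOrbit_eq ρ l₀).symm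
      rw [this]
      exact (Delta ρ).zsmul_mem (normOrbit_mem_Delta ρ
        ((isLineClass_iff_mem).2 ((Finset.mem_filter.1 ((fact_comps L hL27) ▸ hsub hl₀)).1))) _

lemma mem_compsT_iff {L : Fin 7 → ℤ} (hL27 : L ∈ lines27) {l : Fin 7 → ℤ} :
    l ∈ compsT L ↔ IsLineClass l ∧ picInter l L = 1 := by
  rw [fact_comps L hL27, Finset.mem_filter, isLineClass_iff_mem]

lemma mem_secsT_iff {L : Fin 7 → ℤ} (hL27 : L ∈ lines27) {l : Fin 7 → ℤ} :
    l ∈ secsT L ↔ IsLineClass l ∧ picInter l L = 0 := by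
  rw [fact_secs L hL27, Finset.mem_filter, isLineClass_iff_mem]

section withL

variable {L : Fin 7 → ℤ} (hL27 : L ∈ lines27)
  (hlines : ∀ (g : G) (l : Fin 7 → ℤ), IsLineClass l → IsLineClass (ρ g l))
  (hint : ∀ (g : G) (a b : Fin 7 → ℤ), picInter (ρ g a) (ρ g b) = picInter a b)
  (hLfix : ∀ g : G, ρ g L = L)

include hL27 hlines hint hLfix

lemma compsT_stable : ∀ g, ∀ l ∈ compsT L, ρ g l ∈ compsT L := by
  intro g l hl
  rcases (mem_compsT_iff hL27).1 hl with ⟨h1, h2⟩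
  refine (mem_compsT_iff hL27).2 ⟨hlines g l h1, ?_⟩
  calc picInter (ρ g l) L = picInter (ρ g l) (ρ g L) := by rw [hLfix g]
    _ = picInter l L := hint g l L
    _ = 1 := h2

lemma secsT_stable : ∀ g, ∀ l ∈ secsT L, ρ g l ∈ secsT L := by
  intro g l hl
  rcases (mem_secsT_iff hL27).1 hl with ⟨h1, h2⟩
  refine (mem_secsT_iff hL27).2 ⟨hlines g l h1, ?_⟩
  calc picInter (ρ g l) L = picInter (ρ g l) (ρ g L) := by rw [hLfix g]
    _ = picInter l L := hint g l L
    _ = 0 := h2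

lemma L_fixed_mem_Delta (hL : IsLineClass L) : L ∈ Delta ρ := by
  have himg : Finset.image (fun g : G => ρ g L) Finset.univ = {L} := by
    rw [show (fun g : G => ρ g L) = (fun _ => L) from funext hLfix,
      Finset.image_const Finset.univ_nonempty]
  have : normOrbit ρ L = L := by
    rw [normOrbit, himg, Finset.sum_singleton]
  rw [← this]
  exact normOrbit_mem_Delta ρ hL

lemma even_case (hK : ∀ g : G, ρ g KX = KX) (hL : IsLineClass L)
    (x : Fin 7 → ℤ) (hx : ∀ g, ρ g x = x)
    (he : ∃ e : ℤ, picInter x (-KX - L) = 2 * e) :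
    ∃ n : ℤ, x - n • (-KX - L) ∈ Delta ρ := by
  have hFfix : ∀ g : G, ρ g (-KX - L) = -KX - L := by
    intro g; rw [map_sub, map_neg, hK, hLfix]
  obtain ⟨e, he⟩ := he
  set y := x - e • L with hy
  have hyfix : ∀ g, ρ g y = y := by
    intro g; rw [hy, map_sub, hx, map_zsmul, hLfix]
  have hyF : picInter y (-KX - L) = 0 := by
    rw [hy, picInter_sub_left, picInter_smul_left, fact_f8 L hL27, he]; ring
  -- the representation from UI
  have hUI := UI hL27 y
  rw [hyF, zero_smul, add_zero] at hUI
  have hrep : ∑ l ∈ repsT L, (-(picInter y l)) • l = y - (picInter y (zt L)) • (-KX - L) := by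
    have h1 : ∑ l ∈ repsT L, (-(picInter y l)) • l = -∑ l ∈ repsT L, (picInter y l) • l := by
      rw [← Finset.sum_neg_distrib]
      exact Finset.sum_congr rfl fun l _ => neg_smul _ _
    rw [h1, eq_sub_iff_add_eq, neg_add_eq_sub, sub_eq_iff_eq_add']
    rw [← hUI]
    abel
  -- apply the vertical lemma with T = compsT L
  have hfilter : (compsT L).filter (· ∈ repsT L) = repsT L := by
    ext m
    simp only [Finset.mem_filter]
    exact ⟨fun h => h.2, fun h => ⟨fact_repsub L hL27 h, h⟩⟩
  obtain ⟨n₀, hn₀⟩ := vlem ρ hL27 hFfix hint y hyfix hyF (compsT L).card (compsT L) le_rfl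
    (subset_refl _) (compsT_stable ρ hL27 hlines hint hLfix) (fun l hl => fact_f2 L hL27 l hl)
  rw [hfilter, hrep] at hn₀
  refine ⟨picInter y (zt L) + n₀, ?_⟩
  have hxy : x - (picInter y (zt L) + n₀) • (-KX - L)
      = (y - (picInter y (zt L)) • (-KX - L) - n₀ • (-KX - L)) + e • L := by
    rw [hy, add_smul]; abel
  rw [hxy]
  exact (Delta ρ).add_mem hn₀ ((Delta ρ).zsmul_mem (L_fixed_mem_Delta ρ hL27 hlines hint hLfix hL) e)

end withL

end SD9

open SD9

/-- For a smooth cubic surface `X/k` with a `k`-line `L`, the quotient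
`Pic(X)/Δ` is a quotient of `ℤ/5`, generated by the class of a fibre
`X_O` (class `F = -KX - L`) of the conic bundle over a rational point:
`5F ∈ Δ` and every Galois-fixed class is congruent mod `Δ` to a multiple
of `F`. -/
theorem stmt9
    (ρ : G →* Multiplicative (AddAut (Fin 7 → ℤ)))
    (hlines : ∀ (g : G) (l : Fin 7 → ℤ), IsLineClass l → IsLineClass (Multiplicative.toAdd (ρ g) l))
    (hint : ∀ (g : G) (a b : Fin 7 → ℤ), picInter (Multiplicative.toAdd (ρ g) a) (Multiplicative.toAdd (ρ g) b) = picInter a b)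
    (hK : ∀ g : G, Multiplicative.toAdd (ρ g) KX = KX)
    (L : Fin 7 → ℤ) (hL : IsLineClass L) (hLfix : ∀ g : G, Multiplicative.toAdd (ρ g) L = L) :
    (5 : ℤ) • (-KX - L) ∈ Delta ρ ∧
      ∀ x ∈ fixedSubgroup ρ, ∃ n : ℤ, x - n • (-KX - L) ∈ Delta ρ := by
  have hL27 : L ∈ lines27 := isLineClass_iff_mem.1 hL
  have hFfix : ∀ g : G, ρ g (-KX - L) = -KX - L := by
    intro g; rw [map_sub, map_neg, hK, hLfix]
  constructor
  · -- part 1 : 5F is the sum of the fibre components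
    rw [← fact_f6 L hL27]
    exact sum_stable_mem_delta ρ (compsT L).card (compsT L) le_rfl
      (fun l hl => ((mem_compsT_iff hL27).1 hl).1)
      (compsT_stable ρ hL27 hlines hint hLfix)
  · -- part 2
    intro x hxmem
    have hx : ∀ g, ρ g x = x := hxmem
    set d := picInter x (-KX - L) with hd
    rcases Int.even_or_odd d with ⟨e, he⟩ | ⟨e, he⟩
    · exact even_case ρ hL27 hlines hint hLfix hK hL x hx ⟨e, by omega⟩
    · -- odd case
      set Small := (compsT L).filter (fun l => 2 * picInter x l < d) with hSmall
      have pair_inv : ∀ (g : G) (m : Fin 7 → ℤ), picInter x (ρ g m) = picInter x m := by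
        intro g m
        have h1 : picInter (ρ g x) (ρ g m) = picInter x m := hint g x m
        rwa [hx g] at h1
      have hpairval : ∀ m : Fin 7 → ℤ, picInter x (-KX - L - m) = d - picInter x m := by
        intro m; rw [picInter_sub_right, hd]
      have hxor : ∀ l ∈ compsT L, (l ∈ Small ↔ ¬(-KX - L - l ∈ Small)) := by
        intro l hl
        have h2 : -KX - L - l ∈ compsT L := fact_f2 L hL27 l hl
        rw [hSmall, Finset.mem_filter, Finset.mem_filter, hpairval]
        constructor
        · rintro ⟨-, hlt⟩ ⟨-, hlt'⟩
          omega
        · intro hno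
          refine ⟨hl, ?_⟩
          by_contra hcon
          exact hno ⟨h2, by omega⟩
      have hSmallStab : ∀ g, ∀ l ∈ Small, ρ g l ∈ Small := by
        intro g l hl
        rcases Finset.mem_filter.1 hl with ⟨h1, h2⟩
        exact Finset.mem_filter.2 ⟨compsT_stable ρ hL27 hlines hint hLfix g l h1,
          by rw [pair_inv]; exact h2⟩
      set T₀ := (repsT L).filter (fun l => -KX - L - l ∈ Small) with hT₀
      set w := ∑ l ∈ repsT L, (if l ∈ T₀ then -KX - L - l else l) with hw
      have hwmem : w ∈ wlistT L :=
        fact_wmem L hL27 T₀ (Finset.mem_powerset.2 (Finset.filter_subset _ _))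
      -- Small is the image of repsT under the pick map
      have himg : Small = (repsT L).image (fun l => if l ∈ T₀ then -KX - L - l else l) := by
        ext m
        constructor
        · intro hm
          have hmc : m ∈ compsT L := Finset.filter_subset _ _ hm
          by_cases hmr : m ∈ repsT L
          · refine Finset.mem_image.2 ⟨m, hmr, ?_⟩
            rw [if_neg]
            intro hmT
            exact ((hxor m hmc).1 hm) ((Finset.mem_filter.1 hmT).2)
          · have hFm : -KX - L - m ∈ repsT L := by
              have := fact_f3 L hL27 m hmc
              tauto
            refine Finset.mem_image.2 ⟨-KX - L - m, hFm, ?_⟩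
            rw [if_pos, sub_sub_cancel]
            exact Finset.mem_filter.2 ⟨hFm, by rw [sub_sub_cancel]; exact hm⟩
        · intro hm
          obtain ⟨l, hl, rfl⟩ := Finset.mem_image.1 hm
          have hlc : l ∈ compsT L := fact_repsub L hL27 hl
          by_cases hlT : l ∈ T₀
          · rw [if_pos hlT]
            exact (Finset.mem_filter.1 hlT).2
          · rw [if_neg hlT]
            have hns : ¬(-KX - L - l ∈ Small) := fun hc => hlT (Finset.mem_filter.2 ⟨hl, hc⟩)
            have := hxor l hlc
            tauto
      have hinj : ∀ a ∈ repsT L, ∀ b ∈ repsT L,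
          (if a ∈ T₀ then -KX - L - a else a) = (if b ∈ T₀ then -KX - L - b else b) → a = b := by
        intro a ha b hb hab
        have hac : a ∈ compsT L := fact_repsub L hL27 ha
        have hbc : b ∈ compsT L := fact_repsub L hL27 hb
        by_cases haT : a ∈ T₀ <;> by_cases hbT : b ∈ T₀
        · rw [if_pos haT, if_pos hbT] at hab
          have := congrArg (fun v => -KX - L - v) hab
          simpa [sub_sub_cancel] using this
        · rw [if_pos haT, if_neg hbT] at hab
          exfalso
          have : ¬(-KX - L - a ∈ repsT L) := (fact_f3 L hL27 a hac).1 ha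
          rw [hab] at this
          exact this hb
        · rw [if_neg haT, if_pos hbT] at hab
          exfalso
          have : ¬(-KX - L - b ∈ repsT L) := (fact_f3 L hL27 b hbc).1 hb
          rw [← hab] at this
          exact this ha
        · rw [if_neg haT, if_neg hbT] at hab
          exact hab
      have hsumSmall : ∑ m ∈ Small, m = w := by
        rw [himg, Finset.sum_image hinj]
      have hwfix : ∀ g, ρ g w = w := by
        intro g
        rw [← hsumSmall]
        exact rho_sum_fixed ρ Small hSmallStab g
      set W := (secsT L).filter (fun s => picInter s w ≤ 1) with hW
      have hWodd : W.card % 2 = 1 := fact_f9 L hL27 w hwmem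
      have hWstab : ∀ g, ∀ s ∈ W, ρ g s ∈ W := by
        intro g s hs
        rcases Finset.mem_filter.1 hs with ⟨h1, h2⟩
        refine Finset.mem_filter.2 ⟨secsT_stable ρ hL27 hlines hint hLfix g s h1, ?_⟩
        calc picInter (ρ g s) w = picInter (ρ g s) (ρ g w) := by rw [hwfix g]
          _ = picInter s w := hint g s w
          _ ≤ 1 := h2
      obtain ⟨s₀, hs₀W, hs₀odd⟩ := exists_odd_orb ρ W.card W le_rfl hWodd hWstab
      have hs₀sec : s₀ ∈ secsT L := Finset.filter_subset _ _ hs₀W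
      have hs₀line : IsLineClass s₀ := ((mem_secsT_iff hL27).1 hs₀sec).1
      have horbsec : ∀ m ∈ orb ρ s₀, m ∈ secsT L := by
        intro m hm
        obtain ⟨g, rfl⟩ := (mem_orb ρ).1 hm
        exact secsT_stable ρ hL27 hlines hint hLfix g s₀ hs₀sec
      set x' := x - normOrbit ρ s₀ with hx'
      have hx'fix : ∀ g, ρ g x' = x' := by
        intro g; rw [hx', map_sub, hx, rho_normOrbit]
      have hnormF : picInter (normOrbit ρ s₀) (-KX - L) = ((orb ρ s₀).card : ℤ) := by
        rw [normOrbit_eq, picInter_sum_left]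
        rw [Finset.sum_congr rfl (fun m hm => fact_f7 L hL27 m (horbsec m hm))]
        rw [Finset.sum_const, nsmul_eq_mul, mul_one]
      have hd' : picInter x' (-KX - L) = d - ((orb ρ s₀).card : ℤ) := by
        rw [hx', picInter_sub_left, hnormF, hd]
      obtain ⟨n, hn⟩ := even_case ρ hL27 hlines hint hLfix hK hL x' hx'fix
        ⟨(d - ((orb ρ s₀).card : ℤ)) / 2, by rw [hd']; omega⟩
      refine ⟨n, ?_⟩
      have hfin : x - n • (-KX - L) = (x' - n • (-KX - L)) + normOrbit ρ s₀ := by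
        rw [hx']; abel
      rw [hfin]
      exact (Delta ρ).add_mem hn (normOrbit_mem_Delta ρ hs₀line)
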